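/- arXiv:0710.1273 — 4 statements merged into one kernel-verified Lean document; each statement's English description precedes it below -/
import Mathlib

section
/- Let F be a field and let M(x)=[A(x)|B(x)] be a bipartite pattern matrix in n unknowns. Let 𝒜 be a largest left matchbox and ℬ a largest right matchbox such that v(𝒜,ℬ) is minimal among all pairs consisting of a largest left matchbox and a largest right matchbox. Then there exist a permutation matrix P of size m and permutation matrices Q₁ of size p and Q₂ of size q such that [P·A(ε_{𝒜∪ℬ})·Q₁ | P·B(ε_{𝒜∪ℬ})·Q₂] equals the canonical bipartite matrix C(r,s,t) with r = v(𝒜,ℬ), s = |𝒜| − r, and t = |ℬ| − r. -/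
open Matrix

/-- A position in the bipartite pattern: either an entry of the `m × p` A-block
or an entry of the `m × q` B-block. -/
abbrev BipPos (m p q : ℕ) := (Fin m × Fin p) ⊕ (Fin m × Fin q)

/-- The row index of a position. -/
def posRow {m p q : ℕ} : BipPos m p q → Fin m := Sum.elim Prod.fst Prod.fst

/-- The column index of a position (as a column of the block matrix `[A|B]`). -/
def posCol {m p q : ℕ} : BipPos m p q → Fin p ⊕ Fin q := Sum.map Prod.snd Prod.snd

/-- The A-block of the pattern matrix, at the substitution `a`. -/
def patA {m p q n : ℕ} (pos : Fin n → BipPos m p q) {R : Type*} [CommRing R]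
    (a : Fin n → R) : Matrix (Fin m) (Fin p) R :=
  Matrix.of fun i j => ∑ l : Fin n, if pos l = Sum.inl (i, j) then a l else 0

/-- The B-block of the pattern matrix, at the substitution `a`. -/
def patB {m p q n : ℕ} (pos : Fin n → BipPos m p q) {R : Type*} [CommRing R]
    (a : Fin n → R) : Matrix (Fin m) (Fin q) R :=
  Matrix.of fun i k => ∑ l : Fin n, if pos l = Sum.inr (i, k) then a l else 0

/-- The full bipartite pattern matrix `M = [A | B]` at the substitution `a`. -/
def patM {m p q n : ℕ} (pos : Fin n → BipPos m p q) {R : Type*} [CommRing R]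
    (a : Fin n → R) : Matrix (Fin m) (Fin p ⊕ Fin q) R :=
  Matrix.fromCols (patA pos a) (patB pos a)

/-- The generic point: the variables `x₁, …, xₙ` viewed in the field
`K = F(x₁,…,xₙ)` of rational functions. -/
noncomputable def genericX (F : Type*) [Field F] (n : ℕ) :
    Fin n → FractionRing (MvPolynomial (Fin n) F) :=
  fun l => algebraMap (MvPolynomial (Fin n) F) (FractionRing (MvPolynomial (Fin n) F))
    (MvPolynomial.X l)

/-- The generic rank `r_A` of the A-block. -/
noncomputable def genRankA (F : Type*) [Field F] {m p q n : ℕ}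
    (pos : Fin n → BipPos m p q) : ℕ :=
  (patA pos (genericX F n)).rank

/-- The generic rank `r_B` of the B-block. -/
noncomputable def genRankB (F : Type*) [Field F] {m p q n : ℕ}
    (pos : Fin n → BipPos m p q) : ℕ :=
  (patB pos (genericX F n)).rank

/-- The generic rank `r_M` of `M = [A | B]`. -/
noncomputable def genRankM (F : Type*) [Field F] {m p q n : ℕ}
    (pos : Fin n → BipPos m p q) : ℕ :=
  (patM pos (genericX F n)).rank

/-- Equivalence of bipartite matrices: `[A'|B'] = [S·A·R₁ | S·B·R₂]` with
`S, R₁, R₂` invertible. -/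
def BipEquiv {F : Type*} [Field F] {m p q : ℕ}
    (A : Matrix (Fin m) (Fin p) F) (B : Matrix (Fin m) (Fin q) F)
    (A' : Matrix (Fin m) (Fin p) F) (B' : Matrix (Fin m) (Fin q) F) : Prop :=
  ∃ (S : Matrix (Fin m) (Fin m) F) (R₁ : Matrix (Fin p) (Fin p) F)
    (R₂ : Matrix (Fin q) (Fin q) F),
    IsUnit S ∧ IsUnit R₁ ∧ IsUnit R₂ ∧ A' = S * A * R₁ ∧ B' = S * B * R₂

/-- The A-block of the canonical bipartite matrix `C(r,s,t)`:
`I_r` in rows `1..r`, columns `1..r`, and `I_s` in rows `r+1..r+s`,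
columns `r+1..r+s`. -/
def canonA (F : Type*) [Field F] (m p r s : ℕ) : Matrix (Fin m) (Fin p) F :=
  Matrix.of fun i j => if (i : ℕ) = (j : ℕ) ∧ (i : ℕ) < r + s then 1 else 0

/-- The B-block of the canonical bipartite matrix `C(r,s,t)`:
`I_r` in rows `1..r`, columns `t+1..t+r`, and `I_t` in rows `r+s+1..r+s+t`,
columns `1..t`. -/
def canonB (F : Type*) [Field F] (m q r s t : ℕ) : Matrix (Fin m) (Fin q) F :=
  Matrix.of fun i k =>
    if ((i : ℕ) < r ∧ (k : ℕ) = t + (i : ℕ)) ∨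
       (r + s ≤ (i : ℕ) ∧ (i : ℕ) < r + s + t ∧ (k : ℕ) + (r + s) = (i : ℕ)) then 1 else 0

/-- A matchbox: a set of pattern positions, no two sharing a row index and no two
within the same block sharing a column index. -/
def IsMatchbox {m p q n : ℕ} (pos : Fin n → BipPos m p q) (S : Finset (Fin n)) : Prop :=
  ∀ l ∈ S, ∀ l' ∈ S, l ≠ l' →
    posRow (pos l) ≠ posRow (pos l') ∧ posCol (pos l) ≠ posCol (pos l')

/-- A left matchbox: a matchbox all of whose positions lie in the A-block. -/
def IsLeftMatchbox {m p q n : ℕ} (pos : Fin n → BipPos m p q) (S : Finset (Fin n)) : Prop :=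
  IsMatchbox pos S ∧ ∀ l ∈ S, (pos l).isLeft

/-- A right matchbox: a matchbox all of whose positions lie in the B-block. -/
def IsRightMatchbox {m p q n : ℕ} (pos : Fin n → BipPos m p q) (S : Finset (Fin n)) : Prop :=
  IsMatchbox pos S ∧ ∀ l ∈ S, (pos l).isRight

/-- A largest left matchbox. -/
def IsLargestLeft {m p q n : ℕ} (pos : Fin n → BipPos m p q) (S : Finset (Fin n)) : Prop :=
  IsLeftMatchbox pos S ∧ ∀ T : Finset (Fin n), IsLeftMatchbox pos T → T.card ≤ S.card

/-- A largest right matchbox. -/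
def IsLargestRight {m p q n : ℕ} (pos : Fin n → BipPos m p q) (S : Finset (Fin n)) : Prop :=
  IsRightMatchbox pos S ∧ ∀ T : Finset (Fin n), IsRightMatchbox pos T → T.card ≤ S.card

/-- The set of row indices met by the positions of `S`. -/
def rowSet {m p q n : ℕ} (pos : Fin n → BipPos m p q) (S : Finset (Fin n)) : Finset (Fin m) :=
  S.image fun l => posRow (pos l)

/-- `v(𝒜,ℬ)`: the number of row indices met by both `𝒜` and `ℬ`. -/
def vCommon {m p q n : ℕ} (pos : Fin n → BipPos m p q) (𝒜 ℬ : Finset (Fin n)) : ℕ :=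
  (rowSet pos 𝒜 ∩ rowSet pos ℬ).card

/-- `𝒜 ⋓ ℬ`: `𝒜` together with those positions of `ℬ` whose row is not a row of `𝒜`. -/
def mcup {m p q n : ℕ} (pos : Fin n → BipPos m p q) (𝒜 ℬ : Finset (Fin n)) : Finset (Fin n) :=
  𝒜 ∪ ℬ.filter fun l => posRow (pos l) ∉ rowSet pos 𝒜

/-- An optimal pair: a largest left matchbox and a largest right matchbox whose number of
common row indices is minimal among all such pairs. -/
def IsOptimalPair {m p q n : ℕ} (pos : Fin n → BipPos m p q) (𝒜 ℬ : Finset (Fin n)) : Prop :=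
  IsLargestLeft pos 𝒜 ∧ IsLargestRight pos ℬ ∧
  ∀ 𝒜' ℬ' : Finset (Fin n), IsLargestLeft pos 𝒜' → IsLargestRight pos ℬ' →
    vCommon pos 𝒜 ℬ ≤ vCommon pos 𝒜' ℬ'

/-- The characteristic vector `ε_S ∈ {0,1}ⁿ` of a set of labels. -/
def charVec (F : Type*) [Zero F] [One F] {n : ℕ} (S : Finset (Fin n)) : Fin n → F :=
  fun l => if l ∈ S then 1 else 0

/-- The minor `μ_S(x)` of `M(x)` on the rows and the columns met by the matchbox `S`
(as a polynomial; well defined up to sign, rows and columns being indexed by `S`). -/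
noncomputable def minorX (F : Type*) [Field F] {m p q n : ℕ} (pos : Fin n → BipPos m p q)
    (S : Finset (Fin n)) : MvPolynomial (Fin n) F :=
  (Matrix.of fun (l : S) (l' : S) =>
    patM pos (fun i => (MvPolynomial.X i : MvPolynomial (Fin n) F))
      (posRow (pos l)) (posCol (pos l'))).det

lemma pos_inl_eq {m p q : ℕ} (x : BipPos m p q) (h : x.isLeft) :
    x = Sum.inl (posRow x, (x.getLeft h).2) := by
  cases x with
  | inl a => rfl
  | inr a => simp at h

lemma pos_inr_eq {m p q : ℕ} (x : BipPos m p q) (h : x.isRight) :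
    x = Sum.inr (posRow x, (x.getRight h).2) := by
  cases x with
  | inl a => simp at h
  | inr a => rfl

lemma posCol_eq_inl {m p q : ℕ} (x : BipPos m p q) (h : x.isLeft) :
    posCol x = Sum.inl ((x.getLeft h).2) := by
  cases x with
  | inl a => rfl
  | inr a => simp at h

lemma posCol_eq_inr {m p q : ℕ} (x : BipPos m p q) (h : x.isRight) :
    posCol x = Sum.inr ((x.getRight h).2) := by
  cases x with
  | inl a => simp at h
  | inr a => rfl

lemma patA_charVec (F : Type*) [Field F] {m p q n : ℕ} (pos : Fin n → BipPos m p q)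
    (hpos : Function.Injective pos) (𝒜 ℬ : Finset (Fin n))
    (hℬ : ∀ l ∈ ℬ, (pos l).isRight) (i : Fin m) (j : Fin p) :
    patA pos (charVec F (𝒜 ∪ ℬ)) i j = if ∃ a ∈ 𝒜, pos a = Sum.inl (i, j) then 1 else 0 := by
  classical
  show (∑ l : Fin n, if pos l = Sum.inl (i, j) then charVec F (𝒜 ∪ ℬ) l else 0) = _
  by_cases hex : ∃ a ∈ 𝒜, pos a = Sum.inl (i, j)
  · obtain ⟨a, ha, hpa⟩ := hex
    rw [if_pos ⟨a, ha, hpa⟩, Finset.sum_eq_single a]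
    · have : a ∈ 𝒜 ∪ ℬ := Finset.mem_union_left _ ha
      simp [hpa, charVec, this]
    · intro l _ hl
      rw [if_neg]
      intro h
      exact hl (hpos (h.trans hpa.symm))
    · intro h; exact absurd (Finset.mem_univ a) h
  · rw [if_neg hex]
    refine Finset.sum_eq_zero fun l _ => ?_
    by_cases h : pos l = Sum.inl (i, j)
    · rw [if_pos h]
      have hl : l ∉ 𝒜 ∪ ℬ := by
        intro hmem
        rcases Finset.mem_union.mp hmem with h1 | h2
        · exact hex ⟨l, h1, h⟩
        · have := hℬ l h2
          rw [h] at this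
          simp at this
      simp [charVec, hl]
    · rw [if_neg h]

lemma exists_perm_extend {m k : ℕ} (D : Finset (Fin m)) (hD : D.card = k)
    (f : ∀ i : ℕ, i < k → Fin m)
    (hmem : ∀ i (h : i < k), f i h ∈ D)
    (hinj : ∀ i (hi : i < k), ∀ j (hj : j < k), f i hi = f j hj → i = j) :
    ∃ σ : Equiv.Perm (Fin m), (∀ (i : Fin m) (h : (i : ℕ) < k), σ i = f i h) ∧
      (∀ i : Fin m, ¬ (i : ℕ) < k → σ i ∉ D) := by
  classical
  have hk : k ≤ m := by
    rw [← hD]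
    simpa using Finset.card_le_univ D
  set g : {i : Fin m // (i : ℕ) < k} → {ρ : Fin m // ρ ∈ D} :=
    fun i => ⟨f i i.2, hmem _ _⟩ with hg
  have hginj : Function.Injective g := by
    intro a b hab
    have := hinj a a.2 b b.2 (by simpa [hg] using congrArg Subtype.val hab)
    exact Subtype.ext (Fin.ext this)
  have e0 : {i : Fin m // (i : ℕ) < k} ≃ Fin k :=
    ⟨fun i => ⟨(i.1 : ℕ), i.2⟩, fun j => ⟨⟨(j : ℕ), lt_of_lt_of_le j.2 hk⟩, j.2⟩,
      fun i => Subtype.ext (Fin.ext rfl), fun j => Fin.ext rfl⟩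
  have hcard : Fintype.card {i : Fin m // (i : ℕ) < k} = Fintype.card {ρ : Fin m // ρ ∈ D} := by
    rw [Fintype.card_congr e0, Fintype.card_fin, Fintype.card_coe, hD]
  set e := Equiv.ofBijective g ((Fintype.bijective_iff_injective_and_card g).mpr ⟨hginj, hcard⟩)
    with he
  refine ⟨e.extendSubtype, ?_, ?_⟩
  · intro i h
    rw [Equiv.extendSubtype_apply_of_mem e i h]
    rfl
  · intro i h
    exact Equiv.extendSubtype_not_mem e i h

lemma patB_charVec (F : Type*) [Field F] {m p q n : ℕ} (pos : Fin n → BipPos m p q)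
    (hpos : Function.Injective pos) (𝒜 ℬ : Finset (Fin n))
    (h𝒜 : ∀ l ∈ 𝒜, (pos l).isLeft) (i : Fin m) (k : Fin q) :
    patB pos (charVec F (𝒜 ∪ ℬ)) i k = if ∃ b ∈ ℬ, pos b = Sum.inr (i, k) then 1 else 0 := by
  classical
  show (∑ l : Fin n, if pos l = Sum.inr (i, k) then charVec F (𝒜 ∪ ℬ) l else 0) = _
  by_cases hex : ∃ b ∈ ℬ, pos b = Sum.inr (i, k)
  · obtain ⟨b, hb, hpb⟩ := hex
    rw [if_pos ⟨b, hb, hpb⟩, Finset.sum_eq_single b]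
    · have : b ∈ 𝒜 ∪ ℬ := Finset.mem_union_right _ hb
      simp [hpb, charVec, this]
    · intro l _ hl
      rw [if_neg]
      intro h
      exact hl (hpos (h.trans hpb.symm))
    · intro h; exact absurd (Finset.mem_univ b) h
  · rw [if_neg hex]
    refine Finset.sum_eq_zero fun l _ => ?_
    by_cases h : pos l = Sum.inr (i, k)
    · rw [if_pos h]
      have hl : l ∉ 𝒜 ∪ ℬ := by
        intro hmem
        rcases Finset.mem_union.mp hmem with h1 | h2
        · have := h𝒜 l h1
          rw [h] at this
          simp at this
        · exact hex ⟨l, h2, h⟩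
      simp [charVec, hl]
    · rw [if_neg h]

lemma natinj_of_fininj {α : Type*} {k : ℕ} (g : Fin k → α) (hg : Function.Injective g) :
    ∀ i (hi : i < k), ∀ j (hj : j < k), g ⟨i, hi⟩ = g ⟨j, hj⟩ → i = j :=
  fun i hi j hj h => by simpa using hg h

lemma glue_ex {α : Type*} {k1 k2 : ℕ} (g1 : ∀ i, i < k1 → α) (g2 : ∀ i, i < k2 → α) :
    ∃ f : ∀ i : ℕ, i < k1 + k2 → α,
      (∀ i (hi : i < k1 + k2) (h : i < k1), f i hi = g1 i h) ∧
      (∀ i (hi : i < k1 + k2) (h : ¬ i < k1) (h2 : i - k1 < k2), f i hi = g2 (i - k1) h2) := by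
  refine ⟨fun i hi => if h : i < k1 then g1 i h else g2 (i - k1) (by omega), ?_, ?_⟩
  · intro i hi h
    show dite _ _ _ = _
    rw [dif_pos h]
  · intro i hi h h2
    show dite _ _ _ = _
    rw [dif_neg h]

lemma glue_prop {α : Type*} {k1 k2 : ℕ} {g1 : ∀ i, i < k1 → α} {g2 : ∀ i, i < k2 → α}
    {f : ∀ i : ℕ, i < k1 + k2 → α}
    (hf1 : ∀ i (hi : i < k1 + k2) (h : i < k1), f i hi = g1 i h)
    (hf2 : ∀ i (hi : i < k1 + k2) (h : ¬ i < k1) (h2 : i - k1 < k2), f i hi = g2 (i - k1) h2)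
    (P : α → Prop) (h1 : ∀ i hi, P (g1 i hi)) (h2 : ∀ i hi, P (g2 i hi)) :
    ∀ i (hi : i < k1 + k2), P (f i hi) := by
  intro i hi
  by_cases h : i < k1
  · rw [hf1 i hi h]; exact h1 i h
  · rw [hf2 i hi h (by omega)]; exact h2 _ _

lemma glue_inj {α : Type*} {k1 k2 : ℕ} {g1 : ∀ i, i < k1 → α} {g2 : ∀ i, i < k2 → α}
    {f : ∀ i : ℕ, i < k1 + k2 → α}
    (hf1 : ∀ i (hi : i < k1 + k2) (h : i < k1), f i hi = g1 i h)
    (hf2 : ∀ i (hi : i < k1 + k2) (h : ¬ i < k1) (h2 : i - k1 < k2), f i hi = g2 (i - k1) h2)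
    (h1inj : ∀ i (hi : i < k1), ∀ j (hj : j < k1), g1 i hi = g1 j hj → i = j)
    (h2inj : ∀ i (hi : i < k2), ∀ j (hj : j < k2), g2 i hi = g2 j hj → i = j)
    (hne : ∀ i (hi : i < k1), ∀ j (hj : j < k2), g1 i hi ≠ g2 j hj) :
    ∀ i (hi : i < k1 + k2), ∀ j (hj : j < k1 + k2), f i hi = f j hj → i = j := by
  intro i hi j hj h
  by_cases h1 : i < k1 <;> by_cases h2 : j < k1
  · rw [hf1 i hi h1, hf1 j hj h2] at h
    exact h1inj i h1 j h2 h
  · rw [hf1 i hi h1, hf2 j hj h2 (by omega)] at h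
    exact absurd h (hne _ _ _ _)
  · rw [hf2 i hi h1 (by omega), hf1 j hj h2] at h
    exact absurd h.symm (hne _ _ _ _)
  · rw [hf2 i hi h1 (by omega), hf2 j hj h2 (by omega)] at h
    have := h2inj _ (by omega) _ (by omega) h
    omega

lemma pos_eq_inl_iff {m p q : ℕ} (x : BipPos m p q) (h : x.isLeft) (ρ : Fin m) (γ : Fin p) :
    x = Sum.inl (ρ, γ) ↔ posRow x = ρ ∧ posCol x = Sum.inl γ := by
  cases x with
  | inl a => simp [posRow, posCol, Prod.ext_iff]
  | inr a => simp at h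

lemma pos_eq_inr_iff {m p q : ℕ} (x : BipPos m p q) (h : x.isRight) (ρ : Fin m) (γ : Fin q) :
    x = Sum.inr (ρ, γ) ↔ posRow x = ρ ∧ posCol x = Sum.inr γ := by
  cases x with
  | inl a => simp at h
  | inr a => simp [posRow, posCol, Prod.ext_iff]

/-- Enumeration data for an optimal matchbox pair. -/
structure Enums {m p q n : ℕ} (pos : Fin n → BipPos m p q) (𝒜 ℬ : Finset (Fin n)) where
  r : ℕ
  s : ℕ
  t : ℕ
  hr : r = vCommon pos 𝒜 ℬ
  hs : s = 𝒜.card - r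
  ht : t = ℬ.card - r
  a1 : Fin r → Fin n
  a2 : Fin s → Fin n
  b1 : Fin r → Fin n
  b2 : Fin t → Fin n
  ha1mem : ∀ i, a1 i ∈ 𝒜
  ha2mem : ∀ i, a2 i ∈ 𝒜
  hb1mem : ∀ i, b1 i ∈ ℬ
  hb2mem : ∀ i, b2 i ∈ ℬ
  ha1inj : Function.Injective a1
  ha2inj : Function.Injective a2
  hb1inj : Function.Injective b1
  hb2inj : Function.Injective b2
  hb1row : ∀ i, posRow (pos (b1 i)) = posRow (pos (a1 i))
  ha1rowB : ∀ i, posRow (pos (a1 i)) ∈ rowSet pos ℬ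
  ha2rowB : ∀ i, posRow (pos (a2 i)) ∉ rowSet pos ℬ
  hb2rowA : ∀ i, posRow (pos (b2 i)) ∉ rowSet pos 𝒜
  hDcard : (rowSet pos 𝒜 ∪ rowSet pos ℬ).card = r + s + t
  hAcard : 𝒜.card = r + s
  hBcard : ℬ.card = t + r

/-- The permutations and glued enumerations for an optimal matchbox pair. -/
structure Setup {m p q n : ℕ} (pos : Fin n → BipPos m p q) (𝒜 ℬ : Finset (Fin n)) where
  r : ℕ
  s : ℕ
  t : ℕ
  hr : r = vCommon pos 𝒜 ℬ
  hs : s = 𝒜.card - r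
  ht : t = ℬ.card - r
  σ : Equiv.Perm (Fin m)
  τ₁ : Equiv.Perm (Fin p)
  τ₂ : Equiv.Perm (Fin q)
  cfA : ∀ j : ℕ, j < r + s → Fin n
  cfB : ∀ k : ℕ, k < t + r → Fin n
  b1 : Fin r → Fin n
  b2 : Fin t → Fin n
  hcfAmem : ∀ j (hj : j < r + s), cfA j hj ∈ 𝒜
  hcfBmem : ∀ k (hk : k < t + r), cfB k hk ∈ ℬ
  hcfAinj : ∀ j (hj : j < r + s), ∀ j' (hj' : j' < r + s), cfA j hj = cfA j' hj' → j = j'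
  hcfB_lt : ∀ k (hk : k < t + r) (h : k < t), cfB k hk = b2 ⟨k, h⟩
  hcfB_ge : ∀ k (hk : k < t + r) (h : ¬ k < t) (h2 : k - t < r), cfB k hk = b1 ⟨k - t, h2⟩
  hb1mem : ∀ i, b1 i ∈ ℬ
  hb2mem : ∀ i, b2 i ∈ ℬ
  hb1injN : ∀ x (hx : x < r), ∀ y (hy : y < r), b1 ⟨x, hx⟩ = b1 ⟨y, hy⟩ → x = y
  hb2injN : ∀ x (hx : x < t), ∀ y (hy : y < t), b2 ⟨x, hx⟩ = b2 ⟨y, hy⟩ → x = y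
  hb1b2ne : ∀ i j, b1 i ≠ b2 j
  hb1row : ∀ x (hx : x < r) (hrs : x < r + s),
    posRow (pos (b1 ⟨x, hx⟩)) = posRow (pos (cfA x hrs))
  hcfArowB : ∀ j (hj : j < r + s), ¬ j < r → posRow (pos (cfA j hj)) ∉ rowSet pos ℬ
  hb2rowA : ∀ i, posRow (pos (b2 i)) ∉ rowSet pos 𝒜
  hσ_lt : ∀ (i : Fin m) (h : (i : ℕ) < r + s), σ i = posRow (pos (cfA (i : ℕ) h))
  hσ_ge : ∀ (i : Fin m) (h1 : ¬ (i : ℕ) < r + s) (h2 : (i : ℕ) - (r + s) < t),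
    σ i = posRow (pos (b2 ⟨(i : ℕ) - (r + s), h2⟩))
  hσout : ∀ i : Fin m, ¬ (i : ℕ) < r + s + t → ∀ l ∈ 𝒜 ∪ ℬ, posRow (pos l) ≠ σ i
  hτ₁col : ∀ (j : Fin p) (h : (j : ℕ) < r + s),
    posCol (pos (cfA (j : ℕ) h)) = Sum.inl (τ₁ j)
  hτ₁out : ∀ j : Fin p, ¬ (j : ℕ) < r + s → ∀ a ∈ 𝒜, posCol (pos a) ≠ Sum.inl (τ₁ j)
  hτ₂col : ∀ (k : Fin q) (h : (k : ℕ) < t + r),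
    posCol (pos (cfB (k : ℕ) h)) = Sum.inr (τ₂ k)
  hτ₂out : ∀ k : Fin q, ¬ (k : ℕ) < t + r → ∀ b ∈ ℬ, posCol (pos b) ≠ Sum.inr (τ₂ k)

lemma exists_enums {m p q n : ℕ} (pos : Fin n → BipPos m p q) (𝒜 ℬ : Finset (Fin n))
    (hrow𝒜 : ∀ a ∈ 𝒜, ∀ a' ∈ 𝒜, posRow (pos a) = posRow (pos a') → a = a')
    (hrowℬ : ∀ b ∈ ℬ, ∀ b' ∈ ℬ, posRow (pos b) = posRow (pos b') → b = b') :
    Nonempty (Enums pos 𝒜 ℬ) := by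
  classical
  obtain ⟨r, hrdef⟩ : ∃ x, x = vCommon pos 𝒜 ℬ := ⟨_, rfl⟩
  obtain ⟨s, hsdef⟩ : ∃ x, x = 𝒜.card - r := ⟨_, rfl⟩
  obtain ⟨t, htdef⟩ : ∃ x, x = ℬ.card - r := ⟨_, rfl⟩
  obtain ⟨𝒜₁, h𝒜₁def⟩ : ∃ x, x = 𝒜.filter (fun a => posRow (pos a) ∈ rowSet pos ℬ) := ⟨_, rfl⟩
  obtain ⟨𝒜₂, h𝒜₂def⟩ : ∃ x, x = 𝒜.filter (fun a => posRow (pos a) ∉ rowSet pos ℬ) := ⟨_, rfl⟩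
  obtain ⟨ℬ₁, hℬ₁def⟩ : ∃ x, x = ℬ.filter (fun b => posRow (pos b) ∈ rowSet pos 𝒜) := ⟨_, rfl⟩
  obtain ⟨ℬ₂, hℬ₂def⟩ : ∃ x, x = ℬ.filter (fun b => posRow (pos b) ∉ rowSet pos 𝒜) := ⟨_, rfl⟩
  have h𝒜₁sub : 𝒜₁ ⊆ 𝒜 := h𝒜₁def ▸ Finset.filter_subset _ _
  have h𝒜₂sub : 𝒜₂ ⊆ 𝒜 := h𝒜₂def ▸ Finset.filter_subset _ _
  have hℬ₁sub : ℬ₁ ⊆ ℬ := hℬ₁def ▸ Finset.filter_subset _ _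
  have hℬ₂sub : ℬ₂ ⊆ ℬ := hℬ₂def ▸ Finset.filter_subset _ _
  have h𝒜₁row : ∀ x, x ∈ 𝒜₁ → posRow (pos x) ∈ rowSet pos ℬ := by
    intro x hx; rw [h𝒜₁def] at hx; exact (Finset.mem_filter.mp hx).2
  have h𝒜₂row : ∀ x, x ∈ 𝒜₂ → posRow (pos x) ∉ rowSet pos ℬ := by
    intro x hx; rw [h𝒜₂def] at hx; exact (Finset.mem_filter.mp hx).2
  have hℬ₂row : ∀ x, x ∈ ℬ₂ → posRow (pos x) ∉ rowSet pos 𝒜 := by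
    intro x hx; rw [hℬ₂def] at hx; exact (Finset.mem_filter.mp hx).2
  have hcard_rowA : (rowSet pos 𝒜).card = 𝒜.card :=
    Finset.card_image_of_injOn fun a ha a' ha' h =>
      hrow𝒜 a (Finset.mem_coe.mp ha) a' (Finset.mem_coe.mp ha') h
  have hcard_rowB : (rowSet pos ℬ).card = ℬ.card :=
    Finset.card_image_of_injOn fun a ha a' ha' h =>
      hrowℬ a (Finset.mem_coe.mp ha) a' (Finset.mem_coe.mp ha') h
  have himgA1 : 𝒜₁.image (fun a => posRow (pos a)) = rowSet pos 𝒜 ∩ rowSet pos ℬ := by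
    ext ρ
    simp only [Finset.mem_image, Finset.mem_inter, h𝒜₁def, Finset.mem_filter]
    constructor
    · rintro ⟨a, ⟨ha, hb⟩, rfl⟩
      exact ⟨Finset.mem_image_of_mem _ ha, hb⟩
    · rintro ⟨h1, h2⟩
      obtain ⟨a, ha, rfl⟩ := Finset.mem_image.mp h1
      exact ⟨a, ⟨ha, h2⟩, rfl⟩
  have himgB1 : ℬ₁.image (fun b => posRow (pos b)) = rowSet pos 𝒜 ∩ rowSet pos ℬ := by
    ext ρ
    simp only [Finset.mem_image, Finset.mem_inter, hℬ₁def, Finset.mem_filter]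
    constructor
    · rintro ⟨b, ⟨hb, ha⟩, rfl⟩
      exact ⟨ha, Finset.mem_image_of_mem _ hb⟩
    · rintro ⟨h1, h2⟩
      obtain ⟨b, hb, rfl⟩ := Finset.mem_image.mp h2
      exact ⟨b, ⟨hb, h1⟩, rfl⟩
  have h𝒜₁card : 𝒜₁.card = r := by
    have hinj : Set.InjOn (fun a => posRow (pos a)) ↑𝒜₁ := fun a ha a' ha' h =>
      hrow𝒜 a (h𝒜₁sub (Finset.mem_coe.mp ha)) a' (h𝒜₁sub (Finset.mem_coe.mp ha')) h
    rw [hrdef]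
    show 𝒜₁.card = (rowSet pos 𝒜 ∩ rowSet pos ℬ).card
    rw [← himgA1, Finset.card_image_of_injOn hinj]
  have hℬ₁card : ℬ₁.card = r := by
    have hinj : Set.InjOn (fun b => posRow (pos b)) ↑ℬ₁ := fun a ha a' ha' h =>
      hrowℬ a (hℬ₁sub (Finset.mem_coe.mp ha)) a' (hℬ₁sub (Finset.mem_coe.mp ha')) h
    rw [hrdef]
    show ℬ₁.card = (rowSet pos 𝒜 ∩ rowSet pos ℬ).card
    rw [← himgB1, Finset.card_image_of_injOn hinj]
  have hr_leA : r ≤ 𝒜.card := h𝒜₁card ▸ Finset.card_le_card h𝒜₁sub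
  have hr_leB : r ≤ ℬ.card := hℬ₁card ▸ Finset.card_le_card hℬ₁sub
  have hsplitA : 𝒜₁.card + 𝒜₂.card = 𝒜.card := by
    rw [h𝒜₁def, h𝒜₂def]
    exact Finset.card_filter_add_card_filter_not _
  have hsplitB : ℬ₁.card + ℬ₂.card = ℬ.card := by
    rw [hℬ₁def, hℬ₂def]
    exact Finset.card_filter_add_card_filter_not _
  have h𝒜₂card : 𝒜₂.card = s := by omega
  have hℬ₂card : ℬ₂.card = t := by omega
  obtain ⟨a1, ha1mem, ha1inj⟩ :
      ∃ a1 : Fin r → Fin n, (∀ i, a1 i ∈ 𝒜₁) ∧ Function.Injective a1 :=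
    ⟨fun i => ((𝒜₁.orderIsoOfFin h𝒜₁card i : {x // x ∈ 𝒜₁}) : Fin n),
     fun i => (𝒜₁.orderIsoOfFin h𝒜₁card i).2,
     fun i j h => (𝒜₁.orderIsoOfFin h𝒜₁card).injective (Subtype.ext h)⟩
  obtain ⟨a2, ha2mem, ha2inj⟩ :
      ∃ a2 : Fin s → Fin n, (∀ i, a2 i ∈ 𝒜₂) ∧ Function.Injective a2 :=
    ⟨fun i => ((𝒜₂.orderIsoOfFin h𝒜₂card i : {x // x ∈ 𝒜₂}) : Fin n),
     fun i => (𝒜₂.orderIsoOfFin h𝒜₂card i).2,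
     fun i j h => (𝒜₂.orderIsoOfFin h𝒜₂card).injective (Subtype.ext h)⟩
  obtain ⟨b2, hb2mem, hb2inj⟩ :
      ∃ b2 : Fin t → Fin n, (∀ i, b2 i ∈ ℬ₂) ∧ Function.Injective b2 :=
    ⟨fun i => ((ℬ₂.orderIsoOfFin hℬ₂card i : {x // x ∈ ℬ₂}) : Fin n),
     fun i => (ℬ₂.orderIsoOfFin hℬ₂card i).2,
     fun i j h => (ℬ₂.orderIsoOfFin hℬ₂card).injective (Subtype.ext h)⟩
  obtain ⟨b1, hb1⟩ :
      ∃ b1 : Fin r → Fin n, ∀ i, b1 i ∈ ℬ ∧ posRow (pos (b1 i)) = posRow (pos (a1 i)) := by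
    have hex : ∀ i : Fin r, ∃ b, b ∈ ℬ ∧ posRow (pos b) = posRow (pos (a1 i)) := by
      intro i
      obtain ⟨b, hb, hbeq⟩ := Finset.mem_image.mp (h𝒜₁row _ (ha1mem i))
      exact ⟨b, hb, hbeq⟩
    exact ⟨fun i => (hex i).choose, fun i => (hex i).choose_spec⟩
  have hb1mem : ∀ i, b1 i ∈ ℬ := fun i => (hb1 i).1
  have hb1row : ∀ i, posRow (pos (b1 i)) = posRow (pos (a1 i)) := fun i => (hb1 i).2
  have hb1inj : Function.Injective b1 := by
    intro i j h
    have hrr : posRow (pos (a1 i)) = posRow (pos (a1 j)) := by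
      rw [← hb1row i, ← hb1row j, h]
    exact ha1inj (hrow𝒜 _ (h𝒜₁sub (ha1mem i)) _ (h𝒜₁sub (ha1mem j)) hrr)
  have hDcard : (rowSet pos 𝒜 ∪ rowSet pos ℬ).card = r + s + t := by
    have hu := Finset.card_union_add_card_inter (rowSet pos 𝒜) (rowSet pos ℬ)
    have hint : (rowSet pos 𝒜 ∩ rowSet pos ℬ).card = r := by rw [hrdef]; rfl
    omega
  exact ⟨⟨r, s, t, hrdef, hsdef, htdef, a1, a2, b1, b2,
    fun i => h𝒜₁sub (ha1mem i), fun i => h𝒜₂sub (ha2mem i), hb1mem,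
    fun i => hℬ₂sub (hb2mem i), ha1inj, ha2inj, hb1inj, hb2inj, hb1row,
    fun i => h𝒜₁row _ (ha1mem i), fun i => h𝒜₂row _ (ha2mem i),
    fun i => hℬ₂row _ (hb2mem i), hDcard, by omega, by omega⟩⟩

lemma exists_setup {m p q n : ℕ} (pos : Fin n → BipPos m p q) (𝒜 ℬ : Finset (Fin n))
    (hrow𝒜 : ∀ a ∈ 𝒜, ∀ a' ∈ 𝒜, posRow (pos a) = posRow (pos a') → a = a')
    (hcol𝒜 : ∀ a ∈ 𝒜, ∀ a' ∈ 𝒜, posCol (pos a) = posCol (pos a') → a = a')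
    (hrowℬ : ∀ b ∈ ℬ, ∀ b' ∈ ℬ, posRow (pos b) = posRow (pos b') → b = b')
    (hcolℬ : ∀ b ∈ ℬ, ∀ b' ∈ ℬ, posCol (pos b) = posCol (pos b') → b = b')
    (hL𝒜 : ∀ l ∈ 𝒜, (pos l).isLeft) (hRℬ : ∀ l ∈ ℬ, (pos l).isRight) :
    Nonempty (Setup pos 𝒜 ℬ) := by
  classical
  obtain ⟨E⟩ := exists_enums pos 𝒜 ℬ hrow𝒜 hrowℬ
  obtain ⟨r, s, t, hr, hs, ht, a1, a2, b1, b2, ha1mem, ha2mem, hb1mem, hb2mem,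
    ha1inj, ha2inj, hb1inj, hb2inj, hb1row, ha1rowB, ha2rowB, hb2rowA,
    hDcard, hAcard, hBcard⟩ := E
  have ha1a2ne : ∀ i j, a1 i ≠ a2 j := by
    intro i j h
    have h1 := ha1rowB i
    rw [h] at h1
    exact ha2rowB j h1
  have hb1b2ne : ∀ i j, b1 i ≠ b2 j := by
    intro i j h
    have h1 : posRow (pos (b1 i)) ∈ rowSet pos 𝒜 := by
      rw [hb1row i]
      exact Finset.mem_image_of_mem _ (ha1mem i)
    rw [h] at h1
    exact hb2rowA j h1
  -- glued A enumeration
  obtain ⟨cfA, hcfA_ltP, hcfA_geP⟩ := glue_ex (fun i h => a1 ⟨i, h⟩) (fun i h => a2 ⟨i, h⟩)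
  have hcfA_lt : ∀ j (hj : j < r + s) (h : j < r), cfA j hj = a1 ⟨j, h⟩ := hcfA_ltP
  have hcfA_ge : ∀ j (hj : j < r + s) (h : ¬ j < r) (h2 : j - r < s),
      cfA j hj = a2 ⟨j - r, h2⟩ := hcfA_geP
  have hcfAmem : ∀ j (hj : j < r + s), cfA j hj ∈ 𝒜 :=
    glue_prop hcfA_lt hcfA_ge (· ∈ 𝒜) (fun i hi => ha1mem _) (fun i hi => ha2mem _)
  have hcfAinj : ∀ j (hj : j < r + s), ∀ j' (hj' : j' < r + s),
      cfA j hj = cfA j' hj' → j = j' :=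
    glue_inj hcfA_lt hcfA_ge (natinj_of_fininj a1 ha1inj) (natinj_of_fininj a2 ha2inj)
      (fun i hi j hj => ha1a2ne _ _)
  -- glued B enumeration
  obtain ⟨cfB, hcfB_ltP, hcfB_geP⟩ := glue_ex (fun i h => b2 ⟨i, h⟩) (fun i h => b1 ⟨i, h⟩)
  have hcfB_lt : ∀ k (hk : k < t + r) (h : k < t), cfB k hk = b2 ⟨k, h⟩ := hcfB_ltP
  have hcfB_ge : ∀ k (hk : k < t + r) (h : ¬ k < t) (h2 : k - t < r),
      cfB k hk = b1 ⟨k - t, h2⟩ := hcfB_geP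
  have hcfBmem : ∀ k (hk : k < t + r), cfB k hk ∈ ℬ :=
    glue_prop hcfB_lt hcfB_ge (· ∈ ℬ) (fun i hi => hb2mem _) (fun i hi => hb1mem _)
  have hcfBinj : ∀ k (hk : k < t + r), ∀ k' (hk' : k' < t + r),
      cfB k hk = cfB k' hk' → k = k' :=
    glue_inj hcfB_lt hcfB_ge (natinj_of_fininj b2 hb2inj) (natinj_of_fininj b1 hb1inj)
      (fun i hi j hj h => hb1b2ne _ _ h.symm)
  -- row function and the row permutation
  obtain ⟨fR, hfR_ltP, hfR_geP⟩ :=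
    glue_ex (fun i h => posRow (pos (cfA i h))) (fun i h => posRow (pos (b2 ⟨i, h⟩)))
  have hfR_lt : ∀ i (hi : i < r + s + t) (h : i < r + s),
      fR i hi = posRow (pos (cfA i h)) := hfR_ltP
  have hfR_ge : ∀ i (hi : i < r + s + t) (h : ¬ i < r + s) (h2 : i - (r + s) < t),
      fR i hi = posRow (pos (b2 ⟨i - (r + s), h2⟩)) := hfR_geP
  have hmemD : ∀ i (hi : i < r + s + t), fR i hi ∈ rowSet pos 𝒜 ∪ rowSet pos ℬ :=
    glue_prop (g1 := fun i h => posRow (pos (cfA i h)))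
      (g2 := fun i h => posRow (pos (b2 ⟨i, h⟩))) hfR_lt hfR_ge
      (· ∈ rowSet pos 𝒜 ∪ rowSet pos ℬ)
      (fun i hi => Finset.mem_union_left _ (Finset.mem_image_of_mem _ (hcfAmem i hi)))
      (fun i hi => Finset.mem_union_right _ (Finset.mem_image_of_mem _ (hb2mem _)))
  have hneRow : ∀ i (hi : i < r + s), ∀ j (hj : j < t),
      posRow (pos (cfA i hi)) ≠ posRow (pos (b2 ⟨j, hj⟩)) := by
    intro i hi j hj h
    have hmm : posRow (pos (cfA i hi)) ∈ rowSet pos 𝒜 :=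
      Finset.mem_image_of_mem _ (hcfAmem i hi)
    rw [h] at hmm
    exact hb2rowA _ hmm
  have hfRinj : ∀ i (hi : i < r + s + t), ∀ j (hj : j < r + s + t),
      fR i hi = fR j hj → i = j :=
    glue_inj (g1 := fun i h => posRow (pos (cfA i h)))
      (g2 := fun i h => posRow (pos (b2 ⟨i, h⟩))) hfR_lt hfR_ge
      (fun i hi j hj h => hcfAinj i hi j hj (hrow𝒜 _ (hcfAmem i hi) _ (hcfAmem j hj) h))
      (fun i hi j hj h => natinj_of_fininj b2 hb2inj i hi j hj
        (hrowℬ _ (hb2mem _) _ (hb2mem _) h))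
      hneRow
  obtain ⟨σ, hσval, hσout⟩ := exists_perm_extend _ hDcard fR hmemD hfRinj
  -- the A-column permutation
  obtain ⟨DA, hDAdef⟩ :
      ∃ x, x = 𝒜.attach.image (fun a => ((pos a.1).getLeft (hL𝒜 a.1 a.2)).2) := ⟨_, rfl⟩
  have hDAcard : DA.card = r + s := by
    have hinj : Set.InjOn (fun a : {x // x ∈ 𝒜} => ((pos a.1).getLeft (hL𝒜 a.1 a.2)).2)
        ↑𝒜.attach := by
      intro a _ a' _ h
      have hcc : posCol (pos a.1) = posCol (pos a'.1) := by
        rw [posCol_eq_inl _ (hL𝒜 a.1 a.2), posCol_eq_inl _ (hL𝒜 a'.1 a'.2)]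
        exact congrArg Sum.inl h
      exact Subtype.ext (hcol𝒜 _ a.2 _ a'.2 hcc)
    rw [hDAdef, Finset.card_image_of_injOn hinj, Finset.card_attach, hAcard]
  obtain ⟨fCA, hfCAeq⟩ :
      ∃ fCA : ∀ j : ℕ, j < r + s → Fin p,
        ∀ j (hj : j < r + s), fCA j hj = ((pos (cfA j hj)).getLeft (hL𝒜 _ (hcfAmem j hj))).2 :=
    ⟨fun j hj => ((pos (cfA j hj)).getLeft (hL𝒜 _ (hcfAmem j hj))).2, fun j hj => rfl⟩
  have hfCAmemDA : ∀ j (hj : j < r + s), fCA j hj ∈ DA := by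
    intro j hj
    rw [hfCAeq j hj, hDAdef]
    exact Finset.mem_image.mpr ⟨⟨cfA j hj, hcfAmem j hj⟩, Finset.mem_attach _ _, rfl⟩
  have hfCAinj : ∀ j (hj : j < r + s), ∀ j' (hj' : j' < r + s),
      fCA j hj = fCA j' hj' → j = j' := by
    intro j hj j' hj' h
    rw [hfCAeq j hj, hfCAeq j' hj'] at h
    have hcc : posCol (pos (cfA j hj)) = posCol (pos (cfA j' hj')) := by
      rw [posCol_eq_inl _ (hL𝒜 _ (hcfAmem j hj)), posCol_eq_inl _ (hL𝒜 _ (hcfAmem j' hj'))]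
      exact congrArg Sum.inl h
    exact hcfAinj j hj j' hj' (hcol𝒜 _ (hcfAmem j hj) _ (hcfAmem j' hj') hcc)
  obtain ⟨τ₁, hτ₁val, hτ₁out⟩ := exists_perm_extend DA hDAcard fCA hfCAmemDA hfCAinj
  -- the B-column permutation
  obtain ⟨DB, hDBdef⟩ :
      ∃ x, x = ℬ.attach.image (fun b => ((pos b.1).getRight (hRℬ b.1 b.2)).2) := ⟨_, rfl⟩
  have hDBcard : DB.card = t + r := by
    have hinj : Set.InjOn (fun b : {x // x ∈ ℬ} => ((pos b.1).getRight (hRℬ b.1 b.2)).2)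
        ↑ℬ.attach := by
      intro a _ a' _ h
      have hcc : posCol (pos a.1) = posCol (pos a'.1) := by
        rw [posCol_eq_inr _ (hRℬ a.1 a.2), posCol_eq_inr _ (hRℬ a'.1 a'.2)]
        exact congrArg Sum.inr h
      exact Subtype.ext (hcolℬ _ a.2 _ a'.2 hcc)
    rw [hDBdef, Finset.card_image_of_injOn hinj, Finset.card_attach, hBcard]
  obtain ⟨fCB, hfCBeq⟩ :
      ∃ fCB : ∀ k : ℕ, k < t + r → Fin q,
        ∀ k (hk : k < t + r), fCB k hk = ((pos (cfB k hk)).getRight (hRℬ _ (hcfBmem k hk))).2 :=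
    ⟨fun k hk => ((pos (cfB k hk)).getRight (hRℬ _ (hcfBmem k hk))).2, fun k hk => rfl⟩
  have hfCBmemDB : ∀ k (hk : k < t + r), fCB k hk ∈ DB := by
    intro k hk
    rw [hfCBeq k hk, hDBdef]
    exact Finset.mem_image.mpr ⟨⟨cfB k hk, hcfBmem k hk⟩, Finset.mem_attach _ _, rfl⟩
  have hfCBinj : ∀ k (hk : k < t + r), ∀ k' (hk' : k' < t + r),
      fCB k hk = fCB k' hk' → k = k' := by
    intro k hk k' hk' h
    rw [hfCBeq k hk, hfCBeq k' hk'] at h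
    have hcc : posCol (pos (cfB k hk)) = posCol (pos (cfB k' hk')) := by
      rw [posCol_eq_inr _ (hRℬ _ (hcfBmem k hk)), posCol_eq_inr _ (hRℬ _ (hcfBmem k' hk'))]
      exact congrArg Sum.inr h
    exact hcfBinj k hk k' hk' (hcolℬ _ (hcfBmem k hk) _ (hcfBmem k' hk') hcc)
  obtain ⟨τ₂, hτ₂val, hτ₂out⟩ := exists_perm_extend DB hDBcard fCB hfCBmemDB hfCBinj
  -- assemble
  refine ⟨⟨r, s, t, hr, hs, ht, σ, τ₁, τ₂, cfA, cfB, b1, b2, hcfAmem, hcfBmem, hcfAinj,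
    hcfB_lt, hcfB_ge, hb1mem, hb2mem, natinj_of_fininj b1 hb1inj, natinj_of_fininj b2 hb2inj,
    hb1b2ne, ?_, ?_, hb2rowA, ?_, ?_, ?_, ?_, ?_, ?_, ?_⟩⟩
  · -- hb1row
    intro x hx hrs
    rw [hb1row ⟨x, hx⟩, hcfA_lt x hrs hx]
  · -- hcfArowB
    intro j hj hno
    rw [hcfA_ge j hj hno (by omega)]
    exact ha2rowB _
  · -- hσ_lt
    intro i h
    rw [hσval i (by omega), hfR_lt _ (by omega) h]
  · -- hσ_ge
    intro i h1 h2
    rw [hσval i (by omega), hfR_ge _ (by omega) h1 h2]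
  · -- hσout
    intro i hno l hl heq
    refine hσout i hno ?_
    rw [← heq]
    rcases Finset.mem_union.mp hl with h | h
    · exact Finset.mem_union_left _ (Finset.mem_image_of_mem _ h)
    · exact Finset.mem_union_right _ (Finset.mem_image_of_mem _ h)
  · -- hτ₁col
    intro j h
    rw [hτ₁val j h, hfCAeq _ h]
    exact posCol_eq_inl _ _
  · -- hτ₁out
    intro j hno a ha heq
    refine hτ₁out j hno ?_
    have hgl := Sum.inl.inj ((posCol_eq_inl (pos a) (hL𝒜 a ha)).symm.trans heq)
    rw [← hgl, hDAdef]
    exact Finset.mem_image.mpr ⟨⟨a, ha⟩, Finset.mem_attach _ _, rfl⟩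
  · -- hτ₂col
    intro k h
    rw [hτ₂val k h, hfCBeq _ h]
    exact posCol_eq_inr _ _
  · -- hτ₂out
    intro k hno b hb heq
    refine hτ₂out k hno ?_
    have hgr := Sum.inr.inj ((posCol_eq_inr (pos b) (hRℬ b hb)).symm.trans heq)
    rw [← hgr, hDBdef]
    exact Finset.mem_image.mpr ⟨⟨b, hb⟩, Finset.mem_attach _ _, rfl⟩

/-- part of Theorem 2: for an optimal pair `(𝒜, ℬ)` of largest
matchboxes, the 0–1 matrix `M(ε_{𝒜∪ℬ})` becomes, after a permutation of rows and
permutations of columns within each block, the canonical matrix `C(r,s,t)` with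
`r = v(𝒜,ℬ)`, `s = |𝒜| − r`, `t = |ℬ| − r`. -/
theorem stmt_2 (F : Type*) [Field F] (m p q n : ℕ) (pos : Fin n → BipPos m p q)
    (hpos : Function.Injective pos) (𝒜 ℬ : Finset (Fin n))
    (hopt : IsOptimalPair pos 𝒜 ℬ) :
    ∃ (σ : Equiv.Perm (Fin m)) (τ₁ : Equiv.Perm (Fin p)) (τ₂ : Equiv.Perm (Fin q)),
      (patA pos (charVec F (𝒜 ∪ ℬ))).submatrix σ τ₁ =
        canonA F m p (vCommon pos 𝒜 ℬ) (𝒜.card - vCommon pos 𝒜 ℬ) ∧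
      (patB pos (charVec F (𝒜 ∪ ℬ))).submatrix σ τ₂ =
        canonB F m q (vCommon pos 𝒜 ℬ) (𝒜.card - vCommon pos 𝒜 ℬ)
          (ℬ.card - vCommon pos 𝒜 ℬ) := by
  classical
  obtain ⟨hLL, hLR, -⟩ := hopt
  obtain ⟨⟨hmb𝒜, hL𝒜⟩, -⟩ := hLL
  obtain ⟨⟨hmbℬ, hRℬ⟩, -⟩ := hLR
  have hrow𝒜 : ∀ a ∈ 𝒜, ∀ a' ∈ 𝒜, posRow (pos a) = posRow (pos a') → a = a' := by
    intro a ha a' ha' h; by_contra hne; exact (hmb𝒜 a ha a' ha' hne).1 h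
  have hcol𝒜 : ∀ a ∈ 𝒜, ∀ a' ∈ 𝒜, posCol (pos a) = posCol (pos a') → a = a' := by
    intro a ha a' ha' h; by_contra hne; exact (hmb𝒜 a ha a' ha' hne).2 h
  have hrowℬ : ∀ b ∈ ℬ, ∀ b' ∈ ℬ, posRow (pos b) = posRow (pos b') → b = b' := by
    intro a ha a' ha' h; by_contra hne; exact (hmbℬ a ha a' ha' hne).1 h
  have hcolℬ : ∀ b ∈ ℬ, ∀ b' ∈ ℬ, posCol (pos b) = posCol (pos b') → b = b' := by
    intro a ha a' ha' h; by_contra hne; exact (hmbℬ a ha a' ha' hne).2 h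
  obtain ⟨S⟩ := exists_setup pos 𝒜 ℬ hrow𝒜 hcol𝒜 hrowℬ hcolℬ hL𝒜 hRℬ
  obtain ⟨r, s, t, hr, hs, ht, σ, τ₁, τ₂, cfA, cfB, b1, b2, hcfAmem, hcfBmem, hcfAinj,
    hcfB_lt, hcfB_ge, hb1mem, hb2mem, hb1injN, hb2injN, hb1b2ne, hb1row, hcfArowB,
    hb2rowA, hσ_lt, hσ_ge, hσout, hτ₁col, hτ₁out, hτ₂col, hτ₂out⟩ := S
  rw [← hr, ← hs, ← ht]
  have hcfAcongr : ∀ x y (hx : x < r + s) (hy : y < r + s), x = y → cfA x hx = cfA y hy := by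
    rintro x y hx hy rfl; rfl
  have hb1congr : ∀ x y (hx : x < r) (hy : y < r), x = y → b1 ⟨x, hx⟩ = b1 ⟨y, hy⟩ := by
    rintro x y hx hy rfl; rfl
  have hb2congr : ∀ x y (hx : x < t) (hy : y < t), x = y → b2 ⟨x, hx⟩ = b2 ⟨y, hy⟩ := by
    rintro x y hx hy rfl; rfl
  refine ⟨σ, τ₁, τ₂, ?_, ?_⟩
  · ext i j
    rw [Matrix.submatrix_apply, patA_charVec F pos hpos 𝒜 ℬ hRℬ]
    simp only [canonA, Matrix.of_apply]
    refine if_congr ?_ rfl rfl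
    constructor
    · rintro ⟨a, ha, hpa⟩
      obtain ⟨hrowa, hcola⟩ := (pos_eq_inl_iff (pos a) (hL𝒜 a ha) _ _).mp hpa
      have hi3 : (i : ℕ) < r + s + t := by
        by_contra hcon
        exact hσout i hcon a (Finset.mem_union_left _ ha) hrowa
      have hi2 : (i : ℕ) < r + s := by
        by_contra hcon
        have hval := hσ_ge i hcon (by omega)
        have hmm : posRow (pos a) ∈ rowSet pos 𝒜 := Finset.mem_image_of_mem _ ha
        rw [hrowa, hval] at hmm
        exact hb2rowA _ hmm
      have hj2 : (j : ℕ) < r + s := by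
        by_contra hcon
        exact hτ₁out j hcon a ha hcola
      have haI : a = cfA (i : ℕ) hi2 :=
        hrow𝒜 a ha _ (hcfAmem _ hi2) (by rw [hrowa, hσ_lt i hi2])
      have haJ : a = cfA (j : ℕ) hj2 :=
        hcol𝒜 a ha _ (hcfAmem _ hj2) (by rw [hcola, hτ₁col j hj2])
      exact ⟨hcfAinj _ hi2 _ hj2 (haI.symm.trans haJ), hi2⟩
    · rintro ⟨hij, hi2⟩
      have hj2 : (j : ℕ) < r + s := by omega
      refine ⟨cfA (i : ℕ) hi2, hcfAmem _ hi2, ?_⟩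
      refine (pos_eq_inl_iff _ (hL𝒜 _ (hcfAmem _ hi2)) _ _).mpr ⟨(hσ_lt i hi2).symm, ?_⟩
      rw [← hcfAcongr (j : ℕ) (i : ℕ) hj2 hi2 hij.symm]
      exact hτ₁col j hj2
  · ext i k
    rw [Matrix.submatrix_apply, patB_charVec F pos hpos 𝒜 ℬ hL𝒜]
    simp only [canonB, Matrix.of_apply]
    refine if_congr ?_ rfl rfl
    constructor
    · rintro ⟨b, hb, hpb⟩
      obtain ⟨hrowb, hcolb⟩ := (pos_eq_inr_iff (pos b) (hRℬ b hb) _ _).mp hpb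
      have hi3 : (i : ℕ) < r + s + t := by
        by_contra hcon
        exact hσout i hcon b (Finset.mem_union_right _ hb) hrowb
      have hk2 : (k : ℕ) < t + r := by
        by_contra hcon
        exact hτ₂out k hcon b hb hcolb
      have hbK : b = cfB (k : ℕ) hk2 :=
        hcolℬ b hb _ (hcfBmem _ hk2) (by rw [hcolb, hτ₂col k hk2])
      by_cases hi2 : (i : ℕ) < r + s
      · have hi1 : (i : ℕ) < r := by
          by_contra hcon
          have hval := hσ_lt i hi2
          have hmm : posRow (pos b) ∈ rowSet pos ℬ := Finset.mem_image_of_mem _ hb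
          rw [hrowb, hval] at hmm
          exact hcfArowB _ hi2 hcon hmm
        have hbI : b = b1 ⟨(i : ℕ), hi1⟩ :=
          hrowℬ b hb _ (hb1mem _) (by rw [hrowb, hσ_lt i hi2, ← hb1row _ hi1 hi2])
        have hkt : ¬ (k : ℕ) < t := by
          intro hcon
          exact hb1b2ne _ _ ((hbI.symm.trans hbK).trans (hcfB_lt _ hk2 hcon))
        have hbb : b1 ⟨(k : ℕ) - t, by omega⟩ = b1 ⟨(i : ℕ), hi1⟩ :=
          (hcfB_ge _ hk2 hkt (by omega)).symm.trans (hbK.symm.trans hbI)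
        have hval := hb1injN _ (by omega) _ hi1 hbb
        left
        exact ⟨hi1, by omega⟩
      · have hbI : b = b2 ⟨(i : ℕ) - (r + s), by omega⟩ :=
          hrowℬ b hb _ (hb2mem _) (by rw [hrowb, hσ_ge i hi2 (by omega)])
        have hkt : (k : ℕ) < t := by
          by_contra hcon
          exact hb1b2ne _ _ ((hbI.symm.trans hbK).trans (hcfB_ge _ hk2 hcon (by omega))).symm
        have hbb : b2 ⟨(k : ℕ), hkt⟩ = b2 ⟨(i : ℕ) - (r + s), by omega⟩ :=
          (hcfB_lt _ hk2 hkt).symm.trans (hbK.symm.trans hbI)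
        have hval := hb2injN _ hkt _ (by omega) hbb
        right
        exact ⟨by omega, by omega, by omega⟩
    · rintro (⟨hi1, hk1⟩ | ⟨hge, hlt, heq⟩)
      · have hi2 : (i : ℕ) < r + s := by omega
        have hk2 : (k : ℕ) < t + r := by omega
        have hkt : ¬ (k : ℕ) < t := by omega
        refine ⟨b1 ⟨(i : ℕ), hi1⟩, hb1mem _, ?_⟩
        refine (pos_eq_inr_iff _ (hRℬ _ (hb1mem _)) _ _).mpr ⟨?_, ?_⟩
        · rw [hb1row _ hi1 hi2, hσ_lt i hi2]
        · have hcb : cfB (k : ℕ) hk2 = b1 ⟨(i : ℕ), hi1⟩ :=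
            (hcfB_ge _ hk2 hkt (by omega)).trans (hb1congr _ _ (by omega) hi1 (by omega))
          rw [← hcb]
          exact hτ₂col k hk2
      · have hk2 : (k : ℕ) < t + r := by omega
        have hkt : (k : ℕ) < t := by omega
        refine ⟨b2 ⟨(k : ℕ), hkt⟩, hb2mem _, ?_⟩
        refine (pos_eq_inr_iff _ (hRℬ _ (hb2mem _)) _ _).mpr ⟨?_, ?_⟩
        · rw [hσ_ge i (by omega) (by omega)]
          exact congrArg (fun z => posRow (pos z))
            (hb2congr (k : ℕ) ((i : ℕ) - (r + s)) hkt (by omega) (by omega))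
        · rw [← hcfB_lt _ hk2 hkt]
          exact hτ₂col k hk2
end

section
/- Let M=[A|B] be a bipartite matrix over a field F, with A of size m×p and B of size m×q, and suppose M is equivalent to the canonical bipartite matrix C(r,s,t) for some nonnegative integers r, s, t with r+s≤p, r+t≤q, r+s+t≤m. Then r+s = rank A, r+t = rank B, and r+s+t = rank [A|B]; consequently the triple (r,s,t) is uniquely determined by M, and C(r,s,t) and C(r',s',t') are equivalent only if (r,s,t)=(r',s',t'). -/
open Matrix

section Helpers

variable {F : Type*} [Field F]

lemma sel_mul_eq_submatrix {m' n' : Type*} [Fintype m'] [Fintype n'] [DecidableEq m']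
    {k : ℕ} (f : Fin k → m') (M : Matrix m' n' F) :
    (Matrix.of fun (a : Fin k) (i : m') => if f a = i then (1:F) else 0) * M
      = M.submatrix f id := by
  ext a c
  rw [Matrix.mul_apply]
  simp only [Matrix.of_apply, ite_mul, one_mul, zero_mul]
  rw [Fintype.sum_ite_eq (f a) (fun i => M i c)]
  simp

lemma mul_sel_eq_submatrix {m' n' : Type*} [Fintype m'] [Fintype n'] [DecidableEq n']
    {k : ℕ} (g : Fin k → n') (M : Matrix m' n' F) :
    M * (Matrix.of fun (c : n') (b : Fin k) => if g b = c then (1:F) else 0)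
      = M.submatrix id g := by
  ext a b
  rw [Matrix.mul_apply]
  simp only [Matrix.of_apply, mul_ite, mul_one, mul_zero]
  rw [Fintype.sum_ite_eq (g b) (fun c => M a c)]
  simp

lemma rank_submatrix_le'' {m' n' : Type*} [Fintype m'] [Fintype n'] [DecidableEq m']
    [DecidableEq n'] {k l : ℕ} (f : Fin k → m') (g : Fin l → n') (M : Matrix m' n' F) :
    (M.submatrix f g).rank ≤ M.rank := by
  have e1 : M.submatrix f g = (M.submatrix f id) *
      (Matrix.of fun (c : n') (b : Fin l) => if g b = c then (1:F) else 0) := by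
    rw [mul_sel_eq_submatrix]
    rfl
  rw [e1]
  refine le_trans (Matrix.rank_mul_le_left _ _) ?_
  rw [← sel_mul_eq_submatrix f M]
  exact Matrix.rank_mul_le_right _ _

lemma rank_partialPerm {m' n' : Type*} [Fintype m'] [Fintype n'] [DecidableEq m']
    [DecidableEq n'] {k : ℕ} (f : Fin k → m') (g : Fin k → n')
    (hf : Function.Injective f) (hg : Function.Injective g) (M : Matrix m' n' F)
    (hM : ∀ i c, M i c = if ∃ a, f a = i ∧ g a = c then 1 else 0) : M.rank = k := by
  set U : Matrix m' (Fin k) F := Matrix.of fun i a => if f a = i then 1 else 0 with hU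
  set V : Matrix (Fin k) n' F := Matrix.of fun a c => if g a = c then 1 else 0 with hV
  have hfac : M = U * V := by
    ext i c
    rw [hM, Matrix.mul_apply]
    by_cases hex : ∃ a, f a = i ∧ g a = c
    · obtain ⟨a₀, h1, h2⟩ := hex
      rw [if_pos ⟨a₀, h1, h2⟩, Finset.sum_eq_single a₀]
      · simp [hU, hV, h1, h2]
      · intro a _ ha
        have hne : f a ≠ i := fun hfa => ha (hf (hfa.trans h1.symm))
        simp [hU, hne]
      · simp
    · rw [if_neg hex]
      symm
      apply Finset.sum_eq_zero
      intro a _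
      by_cases h1 : f a = i
      · by_cases h2 : g a = c
        · exact absurd ⟨a, h1, h2⟩ hex
        · simp [hV, h2]
      · simp [hU, h1]
  apply le_antisymm
  · rw [hfac]
    refine le_trans (Matrix.rank_mul_le_right _ _) ?_
    refine le_trans (Matrix.rank_le_card_height V) ?_
    simp
  · have hsub : M.submatrix f g = (1 : Matrix (Fin k) (Fin k) F) := by
      ext a b
      rw [Matrix.submatrix_apply, hM, Matrix.one_apply]
      by_cases hab : a = b
      · subst hab
        rw [if_pos ⟨a, rfl, rfl⟩, if_pos rfl]
      · rw [if_neg, if_neg hab]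
        rintro ⟨a', ha1, ha2⟩
        exact hab ((hf ha1).symm.trans (hg ha2))
    calc k = (1 : Matrix (Fin k) (Fin k) F).rank := by simp [Matrix.rank_one]
      _ = (M.submatrix f g).rank := by rw [hsub]
      _ ≤ M.rank := rank_submatrix_le'' f g M

lemma rank_le_of_rows_zero {m k : ℕ} {n' : Type*} [Fintype n']
    (M : Matrix (Fin m) n' F) (hk : k ≤ m)
    (h0 : ∀ i : Fin m, k ≤ (i : ℕ) → ∀ c, M i c = 0) : M.rank ≤ k := by
  set f : Fin k → Fin m := fun a => ⟨a, lt_of_lt_of_le a.2 hk⟩ with hfdef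
  have hfac : M = (Matrix.of fun (i : Fin m) (a : Fin k) => if f a = i then (1:F) else 0) *
      M.submatrix f id := by
    ext i c
    rw [Matrix.mul_apply]
    by_cases h : (i : ℕ) < k
    · rw [Finset.sum_eq_single (⟨(i : ℕ), h⟩ : Fin k)]
      · have : f ⟨(i : ℕ), h⟩ = i := Fin.ext rfl
        simp [this]
      · intro a _ ha
        have hne : f a ≠ i := by
          intro he
          apply ha
          apply Fin.ext
          simpa using congrArg Fin.val he
        simp [hne]
      · simp
    · rw [h0 i (le_of_not_gt h) c]
      symm
      apply Finset.sum_eq_zero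
      intro a _
      have hne : f a ≠ i := by
        intro he
        have := congrArg Fin.val he
        simp only [hfdef] at this
        omega
      simp [hne]
  rw [hfac]
  refine le_trans (Matrix.rank_mul_le_right _ _) ?_
  refine le_trans (Matrix.rank_le_card_height _) ?_
  simp

lemma rank_canonA (F : Type*) [Field F] (m p r s : ℕ) (hp : r + s ≤ p) (hm : r + s ≤ m) :
    (canonA F m p r s).rank = r + s := by
  apply rank_partialPerm
    (fun a : Fin (r+s) => (⟨(a : ℕ), lt_of_lt_of_le a.2 hm⟩ : Fin m))
    (fun a : Fin (r+s) => (⟨(a : ℕ), lt_of_lt_of_le a.2 hp⟩ : Fin p))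
  · intro a a' h
    apply Fin.ext
    simpa using congrArg Fin.val h
  · intro a a' h
    apply Fin.ext
    simpa using congrArg Fin.val h
  · intro i j
    rw [canonA]
    simp only [Matrix.of_apply]
    refine if_congr ?_ rfl rfl
    constructor
    · rintro ⟨hij, hi⟩
      exact ⟨⟨(i : ℕ), hi⟩, Fin.ext rfl, Fin.ext hij⟩
    · rintro ⟨a, h1, h2⟩
      have v1 := congrArg Fin.val h1
      have v2 := congrArg Fin.val h2
      simp only at v1 v2
      have := a.2
      exact ⟨by omega, by omega⟩

lemma rank_canonB (F : Type*) [Field F] (m q r s t : ℕ) (hq : r + t ≤ q)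
    (hm : r + s + t ≤ m) : (canonB F m q r s t).rank = r + t := by
  have fb : ∀ a : Fin (r+t), (if (a : ℕ) < r then (a : ℕ) else (a : ℕ) + s) < m := by
    intro a; have := a.2; split_ifs <;> omega
  have gb : ∀ a : Fin (r+t), (if (a : ℕ) < r then t + (a : ℕ) else (a : ℕ) - r) < q := by
    intro a; have := a.2; split_ifs <;> omega
  apply rank_partialPerm (fun a => (⟨_, fb a⟩ : Fin m)) (fun a => (⟨_, gb a⟩ : Fin q))
  · intro a a' h
    have v := congrArg Fin.val h
    simp only at v
    have := a.2; have := a'.2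
    apply Fin.ext
    split_ifs at v <;> omega
  · intro a a' h
    have v := congrArg Fin.val h
    simp only at v
    have := a.2; have := a'.2
    apply Fin.ext
    split_ifs at v <;> omega
  · intro i k'
    rw [canonB]
    simp only [Matrix.of_apply]
    refine if_congr ?_ rfl rfl
    constructor
    · rintro (⟨h1, h2⟩ | ⟨h1, h2, h3⟩)
      · refine ⟨⟨(i : ℕ), by omega⟩, Fin.ext ?_, Fin.ext ?_⟩
        · show (if (i : ℕ) < r then (i : ℕ) else (i : ℕ) + s) = (i : ℕ)
          rw [if_pos h1]
        · show (if (i : ℕ) < r then t + (i : ℕ) else (i : ℕ) - r) = (k' : ℕ)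
          rw [if_pos h1]; omega
      · refine ⟨⟨(i : ℕ) - s, by omega⟩, Fin.ext ?_, Fin.ext ?_⟩
        · show (if (i : ℕ) - s < r then (i : ℕ) - s else (i : ℕ) - s + s) = (i : ℕ)
          rw [if_neg (by omega)]; omega
        · show (if (i : ℕ) - s < r then t + ((i : ℕ) - s) else (i : ℕ) - s - r) = (k' : ℕ)
          rw [if_neg (by omega)]; omega
    · rintro ⟨a, h1, h2⟩
      have v1 := congrArg Fin.val h1
      have v2 := congrArg Fin.val h2
      simp only at v1 v2
      have := a.2
      split_ifs at v1 v2 with h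
      · exact Or.inl ⟨by omega, by omega⟩
      · exact Or.inr ⟨by omega, by omega, by omega⟩

lemma rank_canonM (F : Type*) [Field F] (m p q r s t : ℕ) (hp : r + s ≤ p)
    (hq : r + t ≤ q) (hm : r + s + t ≤ m) :
    (Matrix.fromCols (canonA F m p r s) (canonB F m q r s t)).rank = r + s + t := by
  apply le_antisymm
  · apply rank_le_of_rows_zero _ hm
    intro i hi c
    rcases c with j | k'
    · rw [Matrix.fromCols_apply_inl, canonA]
      simp only [Matrix.of_apply]
      rw [if_neg]
      rintro ⟨_, h⟩
      omega
    · rw [Matrix.fromCols_apply_inr, canonB]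
      simp only [Matrix.of_apply]
      rw [if_neg]
      rintro (⟨h1, _⟩ | ⟨_, h2, _⟩) <;> omega
  · set f : Fin (r+s+t) → Fin m := fun a => ⟨(a : ℕ), lt_of_lt_of_le a.2 hm⟩ with hfdef
    have gb : ∀ a : Fin (r+s+t), ¬((a : ℕ) < r + s) → (a : ℕ) - (r + s) < q := by
      intro a h; have := a.2; omega
    set g : Fin (r+s+t) → Fin p ⊕ Fin q := fun a =>
      if h : (a : ℕ) < r + s then Sum.inl ⟨(a : ℕ), lt_of_lt_of_le h hp⟩
      else Sum.inr ⟨(a : ℕ) - (r + s), gb a h⟩ with hgdef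
    have hsub : (Matrix.fromCols (canonA F m p r s) (canonB F m q r s t)).submatrix f g
        = (1 : Matrix (Fin (r+s+t)) (Fin (r+s+t)) F) := by
      ext a b
      rw [Matrix.submatrix_apply, Matrix.one_apply]
      have ha2 := a.2
      have hb2 := b.2
      by_cases hb : (b : ℕ) < r + s
      · have hg : g b = Sum.inl ⟨(b : ℕ), lt_of_lt_of_le hb hp⟩ := dif_pos hb
        rw [hg, Matrix.fromCols_apply_inl, canonA]
        simp only [Matrix.of_apply]
        by_cases hab : a = b
        · subst hab
          rw [if_pos ⟨rfl, hb⟩, if_pos rfl]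
        · rw [if_neg, if_neg hab]
          rintro ⟨h1, _⟩
          exact hab (Fin.ext h1)
      · have hg : g b = Sum.inr ⟨(b : ℕ) - (r + s), gb b hb⟩ := dif_neg hb
        rw [hg, Matrix.fromCols_apply_inr, canonB]
        simp only [Matrix.of_apply, hfdef, Fin.val_mk]
        by_cases hab : a = b
        · subst hab
          rw [if_pos (Or.inr ⟨by omega, by omega, by omega⟩), if_pos rfl]
        · rw [if_neg, if_neg hab]
          rintro (⟨h1, h2⟩ | ⟨h1, h2, h3⟩)
          · omega
          · exact hab (Fin.ext (by omega))
    calc r + s + t = (1 : Matrix (Fin (r+s+t)) (Fin (r+s+t)) F).rank := by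
          simp [Matrix.rank_one]
      _ = _ := by rw [← hsub]
      _ ≤ _ := rank_submatrix_le'' f g _

lemma bipEquiv_ranks {F : Type*} [Field F] {m p q : ℕ}
    (A : Matrix (Fin m) (Fin p) F) (B : Matrix (Fin m) (Fin q) F)
    (A' : Matrix (Fin m) (Fin p) F) (B' : Matrix (Fin m) (Fin q) F)
    (h : BipEquiv A B A' B') :
    A'.rank = A.rank ∧ B'.rank = B.rank ∧
      (Matrix.fromCols A' B').rank = (Matrix.fromCols A B).rank := by
  obtain ⟨S, R₁, R₂, hS, hR₁, hR₂, hA, hB⟩ := h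
  have hSdet : IsUnit S.det := (Matrix.isUnit_iff_isUnit_det S).mp hS
  have hR₁det : IsUnit R₁.det := (Matrix.isUnit_iff_isUnit_det R₁).mp hR₁
  have hR₂det : IsUnit R₂.det := (Matrix.isUnit_iff_isUnit_det R₂).mp hR₂
  refine ⟨?_, ?_, ?_⟩
  · rw [hA, Matrix.rank_mul_eq_left_of_isUnit_det R₁ (S * A) hR₁det,
      Matrix.rank_mul_eq_right_of_isUnit_det S A hSdet]
  · rw [hB, Matrix.rank_mul_eq_left_of_isUnit_det R₂ (S * B) hR₂det,
      Matrix.rank_mul_eq_right_of_isUnit_det S B hSdet]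
  · have hblock : Matrix.fromCols A' B' =
        S * Matrix.fromCols A B * Matrix.fromBlocks R₁ 0 0 R₂ := by
      rw [hA, hB, Matrix.mul_assoc, Matrix.mul_fromCols,
        Matrix.fromCols_mul_fromBlocks]
      simp [Matrix.mul_assoc]
    have hbdet : IsUnit (Matrix.fromBlocks R₁ (0 : Matrix (Fin p) (Fin q) F) 0 R₂).det := by
      rw [Matrix.det_fromBlocks_zero₂₁]
      exact hR₁det.mul hR₂det
    rw [hblock, Matrix.rank_mul_eq_left_of_isUnit_det _ _ hbdet,
      Matrix.rank_mul_eq_right_of_isUnit_det _ _ hSdet]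

end Helpers

/-- uniqueness in Lemma 1: if `[A|B]` is equivalent to `C(r,s,t)`,
then `r+s = rank A`, `r+t = rank B`, `r+s+t = rank [A|B]`; consequently the triple
`(r,s,t)` is uniquely determined by `[A|B]`, and two canonical matrices can only be
equivalent if they are equal. -/
theorem stmt_4 (F : Type*) [Field F] (m p q r s t : ℕ)
    (hp : r + s ≤ p) (hq : r + t ≤ q) (hm : r + s + t ≤ m)
    (A : Matrix (Fin m) (Fin p) F) (B : Matrix (Fin m) (Fin q) F)
    (h : BipEquiv A B (canonA F m p r s) (canonB F m q r s t)) :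
    r + s = A.rank ∧ r + t = B.rank ∧ r + s + t = (Matrix.fromCols A B).rank ∧
    (∀ r' s' t' : ℕ, r' + s' ≤ p → r' + t' ≤ q → r' + s' + t' ≤ m →
      BipEquiv A B (canonA F m p r' s') (canonB F m q r' s' t') →
      (r, s, t) = (r', s', t')) ∧
    (∀ r' s' t' : ℕ, r' + s' ≤ p → r' + t' ≤ q → r' + s' + t' ≤ m →
      BipEquiv (canonA F m p r s) (canonB F m q r s t)
        (canonA F m p r' s') (canonB F m q r' s' t') →
      (r, s, t) = (r', s', t')) := by
  have hm1 : r + s ≤ m := by omega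
  obtain ⟨hA, hB, hM⟩ := bipEquiv_ranks A B _ _ h
  have e1 : A.rank = r + s := by rw [← hA, rank_canonA F m p r s hp hm1]
  have e2 : B.rank = r + t := by rw [← hB, rank_canonB F m q r s t hq hm]
  have e3 : (Matrix.fromCols A B).rank = r + s + t := by
    rw [← hM, rank_canonM F m p q r s t hp hq hm]
  refine ⟨e1.symm, e2.symm, e3.symm, ?_, ?_⟩
  · intro r' s' t' hp' hq' hm' h'
    obtain ⟨hA', hB', hM'⟩ := bipEquiv_ranks A B _ _ h'
    have e1' : A.rank = r' + s' := by rw [← hA', rank_canonA F m p r' s' hp' (by omega)]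
    have e2' : B.rank = r' + t' := by rw [← hB', rank_canonB F m q r' s' t' hq' hm']
    have e3' : (Matrix.fromCols A B).rank = r' + s' + t' := by
      rw [← hM', rank_canonM F m p q r' s' t' hp' hq' hm']
    simp only [Prod.mk.injEq]
    omega
  · intro r' s' t' hp' hq' hm' h'
    obtain ⟨hA', hB', hM'⟩ := bipEquiv_ranks _ _ _ _ h'
    rw [rank_canonA F m p r' s' hp' (by omega), rank_canonA F m p r s hp hm1] at hA'
    rw [rank_canonB F m q r' s' t' hq' hm', rank_canonB F m q r s t hq hm] at hB'
    rw [rank_canonM F m p q r' s' t' hp' hq' hm',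
      rank_canonM F m p q r s t hp hq hm] at hM'
    simp only [Prod.mk.injEq]
    omega
end

section
/- Let [A|B] be a bipartite matrix over a field F, with A of size m×p and B of size m×q, whose p+q columns are linearly independent. Then there exists a permutation of the rows of [A|B] after which the submatrix of A lying in the first p rows is nonsingular and the submatrix of B lying in rows p+1, …, p+q is nonsingular. -/
open Matrix

section Aux

variable {F : Type*} [Field F]

/-- From linearly independent columns, extract a set of rows on which the matrix is
invertible. -/
lemma aux_exists_rows {m : ℕ} {ι : Type*} [Fintype ι] [DecidableEq ι]
    (M : Matrix (Fin m) ι F) (hli : LinearIndependent F (fun j => Mᵀ j)) :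
    ∃ g : ι → Fin m, Function.Injective g ∧ (M.submatrix g id).det ≠ 0 := by
  classical
  -- rows of M span everything
  have hspan : Submodule.span F (Set.range M) = ⊤ := by
    have h1 : M.rank = Fintype.card ι := by
      rw [Matrix.rank_eq_finrank_span_cols]
      exact finrank_span_eq_card hli
    have h2 : Mᵀ.rank = Fintype.card ι := by rw [Matrix.rank_transpose]; exact h1
    rw [Matrix.rank_eq_finrank_span_cols, Matrix.col_transpose] at h2
    change Module.finrank F (Submodule.span F (Set.range M)) = Fintype.card ι at h2
    apply Submodule.eq_top_of_finrank_eq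
    rw [h2, Module.finrank_fintype_fun_eq_card]
  obtain ⟨b, hbsub, hbspan, hbind⟩ := exists_linearIndependent F (Set.range M)
  rw [hspan] at hbspan
  have hbfin : b.Finite := by
    have : FiniteDimensional F (ι → F) := by infer_instance
    exact hbind.set_finite_of_isNoetherian
  haveI := hbfin.fintype
  have hcard : Fintype.card ι = Fintype.card b := by
    have h3 := finrank_span_set_eq_card hbind
    rw [hbspan, finrank_top, Module.finrank_fintype_fun_eq_card, Set.toFinset_card] at h3
    exact h3
  obtain e0 := Fintype.equivOfCardEq hcard
  choose c hc using fun x : b => (hbsub x.2 : (x : ι → F) ∈ Set.range M)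
  refine ⟨fun a => c (e0 a), ?_, ?_⟩
  · intro a a' h
    have : ((e0 a : ι → F)) = e0 a' := by rw [← hc (e0 a), ← hc (e0 a')]; exact congrArg M h
    exact e0.injective (Subtype.ext this)
  · have hNrows : LinearIndependent F (fun a => (M.submatrix (fun a => c (e0 a)) id) a) := by
      have : (fun a => (M.submatrix (fun a => c (e0 a)) id) a)
          = ((↑) : b → (ι → F)) ∘ e0 := by
        funext a
        exact hc (e0 a)
      rw [this]
      exact hbind.comp e0 e0.injective
    have hu : IsUnit (M.submatrix (fun a => c (e0 a)) id) :=
      Matrix.linearIndependent_rows_iff_isUnit.mp hNrows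
    have := (Matrix.isUnit_iff_isUnit_det _).mp hu
    exact this.ne_zero

end Aux

section Aux2
variable {F : Type*} [Field F]

lemma aux_split {p q : ℕ} (N : Matrix (Fin p ⊕ Fin q) (Fin p ⊕ Fin q) F) (hN : N.det ≠ 0) :
    ∃ e : Equiv.Perm (Fin p ⊕ Fin q),
      (Matrix.of fun a j => N (e (Sum.inl a)) (Sum.inl j)).det ≠ 0 ∧
      (Matrix.of fun b k => N (e (Sum.inr b)) (Sum.inr k)).det ≠ 0 := by
  classical
  set U : Matrix (Fin p ⊕ Fin q) (Fin p ⊕ Fin q) F :=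
    Matrix.of fun i j => Sum.elim (fun jl => N i (Sum.inl jl)) (fun _ => (0:F)) j with hU
  set W : Matrix (Fin p ⊕ Fin q) (Fin p ⊕ Fin q) F :=
    Matrix.of fun i j => Sum.elim (fun _ => (0:F)) (fun k => N i (Sum.inr k)) j with hW
  have hUW : N = U + W := by
    ext i j
    cases j with
    | inl jl => simp [hU, hW]
    | inr k => simp [hU, hW]
  have hdet : N.det = ∑ S : Finset (Fin p ⊕ Fin q), (Matrix.det (S.piecewise U W)) := by
    conv_lhs => rw [hUW]
    exact (Matrix.detRowAlternating :
      ((Fin p ⊕ Fin q) → F) [⋀^(Fin p ⊕ Fin q)]→ₗ[F] F).toMultilinearMap.map_add_univ U W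
  rw [hdet] at hN
  obtain ⟨S, -, hS⟩ := Finset.exists_ne_zero_of_sum_ne_zero hN
  set T : Matrix (Fin p ⊕ Fin q) (Fin p ⊕ Fin q) F := S.piecewise U W with hT
  have hTS : ∀ i ∈ S, T i = U i := fun i hi => Finset.piecewise_eq_of_mem _ _ _ hi
  have hTSc : ∀ i ∉ S, T i = W i := fun i hi => Finset.piecewise_eq_of_notMem _ _ _ hi
  have hTcols : LinearIndependent F (fun j => Tᵀ j) :=
    Matrix.linearIndependent_cols_iff_isUnit.mpr
      ((Matrix.isUnit_iff_isUnit_det T).mpr (isUnit_iff_ne_zero.mpr hS))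
  have hp : p ≤ S.card := by
    have hv : LinearIndependent F (fun (j : Fin p) (x : ↥S) => T (x : Fin p ⊕ Fin q) (Sum.inl j)) := by
      rw [Fintype.linearIndependent_iff]
      intro c hc0
      have hind := hTcols.comp Sum.inl Sum.inl_injective
      rw [Fintype.linearIndependent_iff] at hind
      apply hind
      funext i
      rw [Finset.sum_apply]
      by_cases hi : i ∈ S
      · have := congrFun hc0 ⟨i, hi⟩
        simpa using this
      · have hz : ∀ j : Fin p, T i (Sum.inl j) = 0 := by
          intro j
          rw [hTSc i hi]
          simp [hW]
        simp [Matrix.transpose_apply, hz]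
    have h := hv.fintype_card_le_finrank
    simpa [Module.finrank_fintype_fun_eq_card] using h
  have hq : q ≤ p + q - S.card := by
    have hv : LinearIndependent F (fun (k : Fin q) (x : ↥Sᶜ) => T (x : Fin p ⊕ Fin q) (Sum.inr k)) := by
      rw [Fintype.linearIndependent_iff]
      intro c hc0
      have hind := hTcols.comp Sum.inr Sum.inr_injective
      rw [Fintype.linearIndependent_iff] at hind
      apply hind
      funext i
      rw [Finset.sum_apply]
      by_cases hi : i ∈ S
      · have hz : ∀ k : Fin q, T i (Sum.inr k) = 0 := by
          intro k
          rw [hTS i hi]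
          simp [hU]
        simp [Matrix.transpose_apply, hz]
      · have := congrFun hc0 ⟨i, Finset.mem_compl.mpr hi⟩
        simpa using this
    have h := hv.fintype_card_le_finrank
    simpa [Module.finrank_fintype_fun_eq_card, Finset.card_compl] using h
  have hSle : S.card ≤ p + q := by simpa using S.card_le_univ
  have hScard : S.card = p := by omega
  have hSccard : Sᶜ.card = q := by
    rw [Finset.card_compl]
    simp only [Fintype.card_sum, Fintype.card_fin, hScard]
    omega
  let eS : Fin p ≃ {x : Fin p ⊕ Fin q // x ∈ S} := (S.equivFin.trans (finCongr hScard)).symm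
  let eQ : Fin q ≃ {x : Fin p ⊕ Fin q // x ∉ S} :=
    ((Sᶜ.equivFin.trans (finCongr hSccard)).symm).trans
      (Equiv.subtypeEquivRight (fun x => Finset.mem_compl))
  let e : Equiv.Perm (Fin p ⊕ Fin q) :=
    (Equiv.sumCongr eS eQ).trans (Equiv.sumCompl (· ∈ S))
  have he1 : ∀ a, e (Sum.inl a) ∈ S := fun a => by
    simpa [e] using (eS a).2
  have he2 : ∀ b, e (Sum.inr b) ∉ S := fun b => by
    simpa [e] using (eQ b).2
  have hdet2 : (T.submatrix e id).det ≠ 0 := by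
    rw [Matrix.det_permute]
    apply mul_ne_zero _ hS
    rcases Int.units_eq_one_or (Equiv.Perm.sign e) with h | h <;> simp [h]
  have hblocks : (T.submatrix e id) =
      Matrix.fromBlocks (Matrix.of fun a j => N (e (Sum.inl a)) (Sum.inl j)) 0 0
        (Matrix.of fun b k => N (e (Sum.inr b)) (Sum.inr k)) := by
    ext i j
    cases i with
    | inl a =>
      have h := hTS _ (he1 a)
      cases j with
      | inl jl => simp [Matrix.submatrix_apply, congrFun h, hU]
      | inr k => simp [Matrix.submatrix_apply, congrFun h, hU]
    | inr b =>
      have h := hTSc _ (he2 b)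
      cases j with
      | inl jl => simp [Matrix.submatrix_apply, congrFun h, hW]
      | inr k => simp [Matrix.submatrix_apply, congrFun h, hW]
  rw [hblocks, Matrix.det_fromBlocks_zero₂₁] at hdet2
  exact ⟨e, mul_ne_zero_iff.mp hdet2⟩

end Aux2

/-- Lemma 2: if the `p+q` columns of a bipartite matrix `[A|B]`
are linearly independent, then there is a permutation of the rows after which the
submatrix of `A` in the first `p` rows and the submatrix of `B` in rows
`p+1, …, p+q` are both nonsingular. (Linear independence forces `p + q ≤ m`.) -/
theorem stmt_5 (F : Type*) [Field F] (m p q : ℕ) (hm : p + q ≤ m)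
    (A : Matrix (Fin m) (Fin p) F) (B : Matrix (Fin m) (Fin q) F)
    (hli : LinearIndependent F (fun j => (Matrix.fromCols A B)ᵀ j)) :
    ∃ σ : Equiv.Perm (Fin m),
      (A.submatrix (fun i : Fin p => σ ⟨(i : ℕ), by have := i.2; omega⟩) id).det ≠ 0 ∧
      (B.submatrix (fun i : Fin q => σ ⟨p + (i : ℕ), by have := i.2; omega⟩) id).det ≠ 0 := by
  classical
  obtain ⟨g, hginj, hgdet⟩ := aux_exists_rows (Matrix.fromCols A B) hli
  obtain ⟨e, hA, hB⟩ := aux_split ((Matrix.fromCols A B).submatrix g id) hgdet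
  set h : (Fin p ⊕ Fin q) → Fin m := fun a => g (e a) with hh
  have hhinj : Function.Injective h := hginj.comp e.injective
  set w : Fin (p + q) → Fin m := fun j => h (finSumFinEquiv.symm j) with hw
  have hwinj : Function.Injective w := hhinj.comp (Equiv.injective _)
  let d1 : {x : Fin m // (x : ℕ) < p + q} ≃ Fin (p + q) :=
    { toFun := fun x => ⟨x.1.1, x.2⟩
      invFun := fun j => ⟨⟨j.1, lt_of_lt_of_le j.2 hm⟩, j.2⟩
      left_inv := fun x => by ext; rfl
      right_inv := fun j => by ext; rfl }
  let e2 : {x : Fin m // (x : ℕ) < p + q} ≃ {x : Fin m // x ∈ Set.range w} :=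
    d1.trans (Equiv.ofInjective w hwinj)
  have key : ∀ (x : Fin m) (hx : (x : ℕ) < p + q),
      e2.extendSubtype x = w ⟨(x : ℕ), hx⟩ := by
    intro x hx
    rw [Equiv.extendSubtype_apply_of_mem e2 x hx]
    simp [e2, d1, Equiv.ofInjective_apply]
  refine ⟨e2.extendSubtype, ?_, ?_⟩
  · have heq : A.submatrix
        (fun i : Fin p => e2.extendSubtype ⟨(i : ℕ), by have := i.2; omega⟩) id
        = Matrix.of fun a j =>
            ((Matrix.fromCols A B).submatrix g id) (e (Sum.inl a)) (Sum.inl j) := by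
      ext a j
      have hx : ((⟨(a : ℕ), by have := a.2; omega⟩ : Fin m) : ℕ) < p + q := by
        show (a : ℕ) < p + q
        have := a.2; omega
      rw [Matrix.submatrix_apply, key _ hx]
      show A (h (finSumFinEquiv.symm (⟨(a : ℕ), hx⟩ : Fin (p + q)))) j = _
      have hsymm : finSumFinEquiv.symm (⟨(a : ℕ), hx⟩ : Fin (p + q)) = Sum.inl a := by
        rw [Equiv.symm_apply_eq]
        ext
        simp
      rw [hsymm]
      simp [hh, Matrix.fromCols]
    rw [heq]
    exact hA
  · have heq : B.submatrix
        (fun i : Fin q => e2.extendSubtype ⟨p + (i : ℕ), by have := i.2; omega⟩) id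
        = Matrix.of fun a k =>
            ((Matrix.fromCols A B).submatrix g id) (e (Sum.inr a)) (Sum.inr k) := by
      ext a k
      have hx : ((⟨p + (a : ℕ), by have := a.2; omega⟩ : Fin m) : ℕ) < p + q := by
        show p + (a : ℕ) < p + q
        have := a.2; omega
      rw [Matrix.submatrix_apply, key _ hx]
      show B (h (finSumFinEquiv.symm (⟨p + (a : ℕ), hx⟩ : Fin (p + q)))) k = _
      have hsymm : finSumFinEquiv.symm (⟨p + (a : ℕ), hx⟩ : Fin (p + q)) = Sum.inr a := by
        rw [Equiv.symm_apply_eq]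
        ext
        simp
      rw [hsymm]
      simp [hh, Matrix.fromCols]
    rw [heq]
    exact hB
end

section
/- Let F be a field and let M(x)=[A(x)|B(x)] be a bipartite pattern matrix in n unknowns with generic ranks r_A, r_B, r_M. Let 𝒜 be a largest left matchbox and ℬ a largest right matchbox such that v(𝒜,ℬ) is minimal among all pairs consisting of a largest left matchbox and a largest right matchbox. Then |𝒜| = r_A, |ℬ| = r_B, and |𝒜⋓ℬ| = r_M. -/
open Matrix

section LA
variable {K : Type*} [Field K] {R C ι ι' : Type*} [Fintype R] [Fintype C] [Fintype ι]
  [Fintype ι'] [DecidableEq ι]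

theorem rank_submatrix_le_gen (X : Matrix R C K) (r : ι → R) (c : ι' → C) :
    (X.submatrix r c).rank ≤ X.rank := by
  have h1 : (X.submatrix r c).rank ≤ (X.submatrix (id : R → R) c).rank := by
    rw [Matrix.rank_eq_finrank_span_row, Matrix.rank_eq_finrank_span_row]
    apply Submodule.finrank_mono
    apply Submodule.span_mono
    rintro _ ⟨i, rfl⟩
    exact ⟨r i, rfl⟩
  have h2 : (X.submatrix (id : R → R) c).rank ≤ X.rank := by
    rw [Matrix.rank_eq_finrank_span_cols, Matrix.rank_eq_finrank_span_cols]
    apply Submodule.finrank_mono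
    apply Submodule.span_mono
    rintro _ ⟨j, rfl⟩
    exact ⟨c j, rfl⟩
  exact h1.trans h2

theorem card_le_rank_of_det_ne_zero (X : Matrix R C K) (r : ι → R) (c : ι → C)
    (hdet : (X.submatrix r c).det ≠ 0) : Fintype.card ι ≤ X.rank := by
  have hu : IsUnit (X.submatrix r c) :=
    (Matrix.isUnit_iff_isUnit_det _).mpr (isUnit_iff_ne_zero.mpr hdet)
  have := Matrix.rank_of_isUnit _ hu
  calc Fintype.card ι = (X.submatrix r c).rank := this.symm
    _ ≤ X.rank := rank_submatrix_le_gen X r c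

theorem indep_rows_of_det_ne_zero (X : Matrix R C K) (r : ι → R) (c : ι → C)
    (hdet : (X.submatrix r c).det ≠ 0) : LinearIndependent K fun i => X (r i) := by
  have hu : IsUnit (X.submatrix r c) :=
    (Matrix.isUnit_iff_isUnit_det _).mpr (isUnit_iff_ne_zero.mpr hdet)
  have h1 : LinearIndependent K fun i => (X.submatrix r c) i :=
    Matrix.linearIndependent_rows_iff_isUnit.mpr hu
  exact LinearIndependent.of_comp (LinearMap.funLeft K K c) h1

theorem exists_indep_rows_extension (X : Matrix R C K) {ι₀ : Type*} (r₀ : ι₀ → R)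
    (h0 : LinearIndependent K fun i => X (r₀ i)) :
    ∃ r : Fin X.rank → R, Function.Injective r ∧ Set.range r₀ ⊆ Set.range r ∧
      LinearIndependent K fun i => X (r i) := by
  classical
  set s : Set (C → K) := Set.range (fun i => X (r₀ i)) with hs_def
  have hs : LinearIndependent K ((↑) : s → (C → K)) := (linearIndepOn_id_range_iff h0.injective).mpr h0
  have hst : s ⊆ Set.range X := by rintro _ ⟨i, rfl⟩; exact ⟨r₀ i, rfl⟩
  obtain ⟨b, hbt, hsb, htb, hb'⟩ := exists_linearIndepOn_id_extension hs hst
  have hb : LinearIndependent K ((↑) : b → (C → K)) := hb'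
  have hbfin : b.Finite := hb.set_finite_of_isNoetherian
  haveI := hbfin.fintype
  have hspan : Submodule.span K b = Submodule.span K (Set.range X) :=
    le_antisymm (Submodule.span_mono hbt) (Submodule.span_le.mpr htb)
  have hcard : b.toFinset.card = X.rank := by
    rw [X.rank_eq_finrank_span_row, Matrix.row, ← hspan, finrank_span_set_eq_card hb]
  have hex : ∀ v : b, ∃ i : R, X i = (v : C → K) ∧ ((v : C → K) ∈ s → ∃ i₀, r₀ i₀ = i) := by
    rintro ⟨v, hv⟩
    by_cases hvs : v ∈ s
    · obtain ⟨i₀, hi₀⟩ := hvs; exact ⟨r₀ i₀, hi₀, fun _ => ⟨i₀, rfl⟩⟩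
    · obtain ⟨i, hi⟩ := hbt hv; exact ⟨i, hi, fun h => absurd h hvs⟩
  choose e he1 he2 using hex
  have einj : Function.Injective e := fun v w h =>
    Subtype.ext (by rw [← he1 v, ← he1 w, h])
  have hcardb : Fintype.card b = X.rank := by rw [← Set.toFinset_card]; exact hcard
  let eqv : Fin X.rank ≃ b := (Fintype.equivFinOfCardEq hcardb).symm
  refine ⟨fun k => e (eqv k), einj.comp eqv.injective, ?_, ?_⟩
  · rintro _ ⟨i₀, rfl⟩
    have hv : X (r₀ i₀) ∈ s := ⟨i₀, rfl⟩
    have hvb : X (r₀ i₀) ∈ b := hsb hv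
    obtain ⟨i₀', hi₀'⟩ := he2 ⟨_, hvb⟩ hv
    have hXeq : (fun i => X (r₀ i)) i₀' = (fun i => X (r₀ i)) i₀ := by
      show X (r₀ i₀') = X (r₀ i₀)
      rw [hi₀', he1 ⟨_, hvb⟩]
    have hii : i₀' = i₀ := h0.injective hXeq
    refine ⟨eqv.symm ⟨_, hvb⟩, ?_⟩
    simp only [Equiv.apply_symm_apply]
    rw [← hi₀', hii]
  · have heq : (fun k => X (e (eqv k))) = fun k => ((eqv k : b) : C → K) :=
      funext fun k => he1 _
    rw [heq]
    exact hb.comp _ eqv.injective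

theorem exists_det_ne_zero_extension (X : Matrix R C K) {ι₀ : Type*} (r₀ : ι₀ → R)
    (h0 : LinearIndependent K fun i => X (r₀ i)) :
    ∃ (r : Fin X.rank → R) (c : Fin X.rank → C), Function.Injective r ∧ Function.Injective c ∧
      Set.range r₀ ⊆ Set.range r ∧ (X.submatrix r c).det ≠ 0 := by
  classical
  obtain ⟨r, hrinj, hrange, hindep⟩ := exists_indep_rows_extension X r₀ h0
  have hYrank : (X.submatrix r id).rank = X.rank := by
    have h2 : LinearIndependent K (X.submatrix r id).row := hindep
    have := h2.rank_matrix
    rw [this, Fintype.card_fin]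
  have hYT : (X.submatrix r id)ᵀ.rank = X.rank := by rw [Matrix.rank_transpose, hYrank]
  obtain ⟨c, hcinj, -, hcind⟩ := exists_indep_rows_extension (X.submatrix r id)ᵀ
    (fun x : PEmpty.{1} => x.elim) linearIndependent_empty_type
  refine ⟨r, c ∘ (finCongr hYT.symm), hrinj, hcinj.comp (finCongr hYT.symm).injective,
    hrange, ?_⟩
  have hQT : LinearIndependent K fun j => (X.submatrix r (c ∘ finCongr hYT.symm))ᵀ j := by
    have heq : (fun j => (X.submatrix r (c ∘ finCongr hYT.symm))ᵀ j)
        = fun j => (X.submatrix r id)ᵀ (c (finCongr hYT.symm j)) := rfl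
    rw [heq]
    exact hcind.comp _ (finCongr hYT.symm).injective
  have hu : IsUnit (X.submatrix r (c ∘ finCongr hYT.symm))ᵀ :=
    Matrix.linearIndependent_rows_iff_isUnit.mp hQT
  rw [Matrix.isUnit_transpose] at hu
  exact ((Matrix.isUnit_iff_isUnit_det _).mp hu).ne_zero

end LA

section PatternDev

variable {m p q n : ℕ}

/-- The position determined by a row index and a column of `[A|B]`. -/
def bpos (i : Fin m) (c : Fin p ⊕ Fin q) : BipPos m p q :=
  Sum.elim (fun j => Sum.inl (i, j)) (fun k => Sum.inr (i, k)) c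

@[simp] lemma posRow_bpos (i : Fin m) (c : Fin p ⊕ Fin q) : posRow (bpos i c) = i := by
  cases c <;> rfl

@[simp] lemma posCol_bpos (i : Fin m) (c : Fin p ⊕ Fin q) : posCol (bpos i c) = c := by
  cases c <;> rfl

@[simp] lemma bpos_row_col (P : BipPos m p q) : bpos (posRow P) (posCol P) = P := by
  rcases P with ⟨i, j⟩ | ⟨i, k⟩ <;> rfl

variable (pos : Fin n → BipPos m p q)

lemma patM_apply {R : Type*} [CommRing R] (a : Fin n → R) (i : Fin m) (c : Fin p ⊕ Fin q) :
    patM pos a i c = ∑ l : Fin n, if pos l = bpos i c then a l else 0 := by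
  cases c <;> rfl

lemma patM_eq_zero {R : Type*} [CommRing R] (a : Fin n → R) {i : Fin m} {c : Fin p ⊕ Fin q}
    (h : ∀ l, pos l ≠ bpos i c) : patM pos a i c = 0 := by
  rw [patM_apply]
  exact Finset.sum_eq_zero fun l _ => if_neg (h l)

lemma patM_eq (hpos : Function.Injective pos) {R : Type*} [CommRing R] (a : Fin n → R)
    {l : Fin n} {i : Fin m} {c : Fin p ⊕ Fin q} (h : pos l = bpos i c) :
    patM pos a i c = a l := by
  rw [patM_apply]
  rw [Finset.sum_eq_single l]
  · rw [if_pos h]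
  · intro l' _ hne
    rw [if_neg]
    intro hl'
    exact hne (hpos (hl'.trans h.symm))
  · intro habs; exact absurd (Finset.mem_univ l) habs

lemma patM_map {R R' : Type*} [CommRing R] [CommRing R'] (f : R →+* R') (a : Fin n → R) :
    patM pos (fun l => f (a l)) = (patM pos a).map f := by
  ext i c
  rw [Matrix.map_apply, patM_apply, patM_apply, map_sum]
  refine Finset.sum_congr rfl fun l _ => ?_
  split <;> simp

end PatternDev

section PatternRank

variable {m p q n : ℕ} (pos : Fin n → BipPos m p q)

/-- From a nonzero generic minor, extract a matchbox. -/
theorem matchbox_of_det (F : Type*) [Field F] {ι : Type*} [Fintype ι] [DecidableEq ι]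
    (hpos : Function.Injective pos) (r : ι → Fin m) (c : ι → Fin p ⊕ Fin q)
    (hr : Function.Injective r) (hc : Function.Injective c)
    (hdet : ((patM pos (genericX F n)).submatrix r c).det ≠ 0) :
    ∃ S : Finset (Fin n), IsMatchbox pos S ∧ S.card = Fintype.card ι ∧
      rowSet pos S = Finset.univ.image r ∧ ∀ l ∈ S, posCol (pos l) ∈ Set.range c := by
  classical
  have hσ : ∃ σ : Equiv.Perm ι, ∀ i, (patM pos (genericX F n)) (r (σ i)) (c i) ≠ 0 := by
    by_contra hcon
    push_neg at hcon
    apply hdet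
    rw [Matrix.det_apply]
    apply Finset.sum_eq_zero
    intro σ _
    obtain ⟨i, hi⟩ := hcon σ
    have : ∏ i, ((patM pos (genericX F n)).submatrix r c) (σ i) i = 0 :=
      Finset.prod_eq_zero (Finset.mem_univ i) hi
    rw [this]; simp
  obtain ⟨σ, hσ⟩ := hσ
  have hex : ∀ i, ∃ l, pos l = bpos (r (σ i)) (c i) := by
    intro i
    by_contra h
    push_neg at h
    exact hσ i (patM_eq_zero pos _ h)
  choose L hL using hex
  have hLinj : Function.Injective L := by
    intro i i' h
    apply hc
    have h2 : bpos (r (σ i)) (c i) = bpos (r (σ i')) (c i') := by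
      rw [← hL i, ← hL i', h]
    have := congrArg posCol h2
    simpa using this
  refine ⟨Finset.univ.image L, ?_, ?_, ?_, ?_⟩
  · intro l hl l' hl' hne
    simp only [Finset.mem_image, Finset.mem_univ, true_and] at hl hl'
    obtain ⟨i, rfl⟩ := hl
    obtain ⟨i', rfl⟩ := hl'
    have hii : i ≠ i' := fun h => hne (by rw [h])
    constructor
    · rw [hL i, hL i', posRow_bpos, posRow_bpos]
      exact fun h => hii (σ.injective (hr h))
    · rw [hL i, hL i', posCol_bpos, posCol_bpos]
      exact fun h => hii (hc h)
  · rw [Finset.card_image_of_injective _ hLinj, Finset.card_univ]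
  · unfold rowSet
    rw [Finset.image_image]
    have : ((fun l => posRow (pos l)) ∘ L) = r ∘ σ := by
      funext i
      simp [Function.comp, hL i]
    rw [this, ← Finset.image_image, Finset.image_univ_equiv]
  · intro l hl
    simp only [Finset.mem_image, Finset.mem_univ, true_and] at hl
    obtain ⟨i, rfl⟩ := hl
    rw [hL i, posCol_bpos]
    exact ⟨i, rfl⟩

/-- The generic minor of a matchbox is nonzero. -/
theorem det_ne_zero_of_matchbox (F : Type*) [Field F] (hpos : Function.Injective pos)
    {S : Finset (Fin n)} (hS : IsMatchbox pos S) :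
    ((patM pos (genericX F n)).submatrix (fun l : ↥S => posRow (pos l))
      (fun l : ↥S => posCol (pos l))).det ≠ 0 := by
  classical
  set φ := algebraMap (MvPolynomial (Fin n) F) (FractionRing (MvPolynomial (Fin n) F)) with hφdef
  have hφ : Function.Injective φ := IsFractionRing.injective _ _
  have hmap : patM pos (genericX F n)
      = (patM pos (fun l => (MvPolynomial.X l : MvPolynomial (Fin n) F))).map φ :=
    patM_map pos φ _
  set P : MvPolynomial (Fin n) F :=
    ((patM pos (fun l => (MvPolynomial.X l : MvPolynomial (Fin n) F))).submatrix
      (fun l : ↥S => posRow (pos l)) (fun l : ↥S => posCol (pos l))).det with hP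
  have hdet : ((patM pos (genericX F n)).submatrix (fun l : ↥S => posRow (pos l))
      (fun l : ↥S => posCol (pos l))).det = φ P := by
    rw [hmap, Matrix.submatrix_map, ← RingHom.mapMatrix_apply, ← RingHom.map_det]
  rw [hdet]
  intro h0
  have hP0 : P = 0 := hφ (by rw [h0, map_zero])
  -- evaluate at the characteristic vector of S
  set a0 : Fin n → F := fun l => if l ∈ S then 1 else 0 with ha0
  have heval : MvPolynomial.eval a0 P = 1 := by
    have h1 : MvPolynomial.eval a0 P
        = ((patM pos a0).submatrix (fun l : ↥S => posRow (pos l))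
            (fun l : ↥S => posCol (pos l))).det := by
      rw [hP, RingHom.map_det, RingHom.mapMatrix_apply, ← Matrix.submatrix_map, ← patM_map]
      congr 2
      funext l
      simp
    rw [h1]
    have h2 : (patM pos a0).submatrix (fun l : ↥S => posRow (pos l))
        (fun l : ↥S => posCol (pos l)) = 1 := by
      ext l l'
      rcases eq_or_ne l l' with rfl | hne
      · rw [Matrix.one_apply_eq, Matrix.submatrix_apply,
          patM_eq pos hpos a0 (bpos_row_col (pos l.1)).symm]
        simp [ha0, l.2]
      · rw [Matrix.one_apply_ne hne, Matrix.submatrix_apply]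
        have hne1 : l.1 ≠ l'.1 := fun h => hne (Subtype.ext h)
        by_cases hex : ∃ l'', pos l'' = bpos (posRow (pos l.1)) (posCol (pos l'.1))
        · obtain ⟨l'', hl''⟩ := hex
          rw [patM_eq pos hpos a0 hl'']
          have hl''S : l'' ∉ S := by
            intro h''S
            have hrow : posRow (pos l'') = posRow (pos l.1) := by
              rw [hl'', posRow_bpos]
            have heq : l'' = l.1 := by
              by_contra hne2
              exact (hS l'' h''S l.1 l.2 hne2).1 hrow
            rw [heq] at hl''
            have hcol : posCol (pos l.1) = posCol (pos l'.1) := by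
              conv_lhs => rw [hl'']
              rw [posCol_bpos]
            exact (hS l.1 l.2 l'.1 l'.2 hne1).2 hcol
          simp [ha0, hl''S]
        · push_neg at hex
          exact patM_eq_zero pos a0 hex
    rw [h2, Matrix.det_one]
  rw [hP0, map_zero] at heval
  exact zero_ne_one heval

end PatternRank

section Ranks

variable {m p q n : ℕ} (pos : Fin n → BipPos m p q)

lemma patA_submatrix {R : Type*} [CommRing R] (a : Fin n → R) :
    patA pos a = (patM pos a).submatrix id Sum.inl := rfl

lemma patB_submatrix {R : Type*} [CommRing R] (a : Fin n → R) :
    patB pos a = (patM pos a).submatrix id Sum.inr := rfl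

lemma exists_acol {S : Finset (Fin n)} (hL : ∀ l ∈ S, (pos l).isLeft) (l : ↥S) :
    ∃ j : Fin p, posCol (pos l.1) = Sum.inl j := by
  rcases hpl : pos l.1 with ⟨i, j⟩ | ⟨i, k⟩
  · exact ⟨j, by rfl⟩
  · have := hL l.1 l.2
    rw [hpl] at this
    simp at this

lemma exists_bcol {S : Finset (Fin n)} (hL : ∀ l ∈ S, (pos l).isRight) (l : ↥S) :
    ∃ k : Fin q, posCol (pos l.1) = Sum.inr k := by
  rcases hpl : pos l.1 with ⟨i, j⟩ | ⟨i, k⟩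
  · have := hL l.1 l.2
    rw [hpl] at this
    simp at this
  · exact ⟨k, by rfl⟩

theorem card_le_genRankM (F : Type*) [Field F] (hpos : Function.Injective pos)
    {S : Finset (Fin n)} (hS : IsMatchbox pos S) : S.card ≤ genRankM F pos := by
  classical
  have hdet := det_ne_zero_of_matchbox pos F hpos hS
  have h := card_le_rank_of_det_ne_zero _ _ _ hdet
  rwa [Fintype.card_coe] at h

theorem det_A_of_left (F : Type*) [Field F] (hpos : Function.Injective pos)
    {S : Finset (Fin n)} (hS : IsLeftMatchbox pos S) :
    ∃ c : ↥S → Fin p, (∀ l : ↥S, posCol (pos l.1) = Sum.inl (c l)) ∧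
      ((patA pos (genericX F n)).submatrix (fun l : ↥S => posRow (pos l.1)) c).det ≠ 0 := by
  classical
  obtain ⟨hmb, hleft⟩ := hS
  choose acol hacol using exists_acol pos hleft
  have hdet := det_ne_zero_of_matchbox pos F hpos hmb
  have hsub : (patA pos (genericX F n)).submatrix (fun l : ↥S => posRow (pos l.1)) acol
      = (patM pos (genericX F n)).submatrix (fun l : ↥S => posRow (pos l.1))
          (fun l : ↥S => posCol (pos l.1)) := by
    have hcols : (fun l : ↥S => posCol (pos l.1)) = fun l => Sum.inl (acol l) :=
      funext hacol
    rw [patA_submatrix, Matrix.submatrix_submatrix, hcols]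
    rfl
  rw [← hsub] at hdet
  exact ⟨acol, hacol, hdet⟩

theorem det_B_of_right (F : Type*) [Field F] (hpos : Function.Injective pos)
    {S : Finset (Fin n)} (hS : IsRightMatchbox pos S) :
    ∃ c : ↥S → Fin q, (∀ l : ↥S, posCol (pos l.1) = Sum.inr (c l)) ∧
      ((patB pos (genericX F n)).submatrix (fun l : ↥S => posRow (pos l.1)) c).det ≠ 0 := by
  classical
  obtain ⟨hmb, hright⟩ := hS
  choose bcol hbcol using exists_bcol pos hright
  have hdet := det_ne_zero_of_matchbox pos F hpos hmb
  have hsub : (patB pos (genericX F n)).submatrix (fun l : ↥S => posRow (pos l.1)) bcol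
      = (patM pos (genericX F n)).submatrix (fun l : ↥S => posRow (pos l.1))
          (fun l : ↥S => posCol (pos l.1)) := by
    have hcols : (fun l : ↥S => posCol (pos l.1)) = fun l => Sum.inr (bcol l) :=
      funext hbcol
    rw [patB_submatrix, Matrix.submatrix_submatrix, hcols]
    rfl
  rw [← hsub] at hdet
  exact ⟨bcol, hbcol, hdet⟩

theorem card_le_genRankA (F : Type*) [Field F] (hpos : Function.Injective pos)
    {S : Finset (Fin n)} (hS : IsLeftMatchbox pos S) : S.card ≤ genRankA F pos := by
  classical
  obtain ⟨c, -, hdet⟩ := det_A_of_left pos F hpos hS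
  have h := card_le_rank_of_det_ne_zero _ _ _ hdet
  rwa [Fintype.card_coe] at h

theorem card_le_genRankB (F : Type*) [Field F] (hpos : Function.Injective pos)
    {S : Finset (Fin n)} (hS : IsRightMatchbox pos S) : S.card ≤ genRankB F pos := by
  classical
  obtain ⟨c, -, hdet⟩ := det_B_of_right pos F hpos hS
  have h := card_le_rank_of_det_ne_zero _ _ _ hdet
  rwa [Fintype.card_coe] at h

end Ranks

section Extension

variable {m p q n : ℕ} (pos : Fin n → BipPos m p q)

theorem exists_left_matchbox_rank (F : Type*) [Field F] (hpos : Function.Injective pos)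
    {ι₀ : Type} (r₀ : ι₀ → Fin m)
    (h0 : LinearIndependent (FractionRing (MvPolynomial (Fin n) F))
      fun i => (patA pos (genericX F n)) (r₀ i)) :
    ∃ T, IsLeftMatchbox pos T ∧ T.card = genRankA F pos ∧ ∀ i₀, r₀ i₀ ∈ rowSet pos T := by
  classical
  obtain ⟨r, c, hrinj, hcinj, hrange, hdet⟩ :=
    exists_det_ne_zero_extension (patA pos (genericX F n)) r₀ h0
  have hsub : (patA pos (genericX F n)).submatrix r c
      = (patM pos (genericX F n)).submatrix r (Sum.inl ∘ c) := by
    ext i j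
    rfl
  rw [hsub] at hdet
  obtain ⟨T, hT, hcard, hrow, hcols⟩ := matchbox_of_det pos F hpos r (Sum.inl ∘ c) hrinj
    (Sum.inl_injective.comp hcinj) hdet
  refine ⟨T, ⟨hT, ?_⟩, ?_, ?_⟩
  · intro l hl
    obtain ⟨i, hi⟩ := hcols l hl
    rcases hpl : pos l with ⟨_, _⟩ | ⟨_, _⟩
    · simp
    · rw [hpl] at hi
      simp [posCol] at hi
  · rw [hcard, Fintype.card_fin]
    rfl
  · intro i₀
    obtain ⟨k, hk⟩ := hrange ⟨i₀, rfl⟩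
    rw [hrow, Finset.mem_image]
    exact ⟨k, Finset.mem_univ k, hk⟩

theorem exists_right_matchbox_rank (F : Type*) [Field F] (hpos : Function.Injective pos)
    {ι₀ : Type} (r₀ : ι₀ → Fin m)
    (h0 : LinearIndependent (FractionRing (MvPolynomial (Fin n) F))
      fun i => (patB pos (genericX F n)) (r₀ i)) :
    ∃ T, IsRightMatchbox pos T ∧ T.card = genRankB F pos ∧ ∀ i₀, r₀ i₀ ∈ rowSet pos T := by
  classical
  obtain ⟨r, c, hrinj, hcinj, hrange, hdet⟩ :=
    exists_det_ne_zero_extension (patB pos (genericX F n)) r₀ h0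
  have hsub : (patB pos (genericX F n)).submatrix r c
      = (patM pos (genericX F n)).submatrix r (Sum.inr ∘ c) := by
    ext i j
    rfl
  rw [hsub] at hdet
  obtain ⟨T, hT, hcard, hrow, hcols⟩ := matchbox_of_det pos F hpos r (Sum.inr ∘ c) hrinj
    (Sum.inr_injective.comp hcinj) hdet
  refine ⟨T, ⟨hT, ?_⟩, ?_, ?_⟩
  · intro l hl
    obtain ⟨i, hi⟩ := hcols l hl
    rcases hpl : pos l with ⟨_, _⟩ | ⟨_, _⟩
    · rw [hpl] at hi
      simp [posCol] at hi
    · simp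
  · rw [hcard, Fintype.card_fin]
    rfl
  · intro i₀
    obtain ⟨k, hk⟩ := hrange ⟨i₀, rfl⟩
    rw [hrow, Finset.mem_image]
    exact ⟨k, Finset.mem_univ k, hk⟩

theorem largestLeft_card (F : Type*) [Field F] (hpos : Function.Injective pos)
    {S : Finset (Fin n)} (h : IsLargestLeft pos S) : S.card = genRankA F pos := by
  refine le_antisymm (card_le_genRankA pos F hpos h.1) ?_
  obtain ⟨T, hT, hcard, -⟩ := exists_left_matchbox_rank pos F hpos
    (fun x : PEmpty.{1} => x.elim) linearIndependent_empty_type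
  exact hcard ▸ h.2 T hT

theorem largestRight_card (F : Type*) [Field F] (hpos : Function.Injective pos)
    {S : Finset (Fin n)} (h : IsLargestRight pos S) : S.card = genRankB F pos := by
  refine le_antisymm (card_le_genRankB pos F hpos h.1) ?_
  obtain ⟨T, hT, hcard, -⟩ := exists_right_matchbox_rank pos F hpos
    (fun x : PEmpty.{1} => x.elim) linearIndependent_empty_type
  exact hcard ▸ h.2 T hT

theorem extend_left (F : Type*) [Field F] (hpos : Function.Injective pos)
    {C : Finset (Fin n)} (hC : IsLeftMatchbox pos C) :
    ∃ 𝒜', IsLargestLeft pos 𝒜' ∧ rowSet pos C ⊆ rowSet pos 𝒜' := by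
  classical
  obtain ⟨c, -, hdet⟩ := det_A_of_left pos F hpos hC
  have h0 := indep_rows_of_det_ne_zero _ _ _ hdet
  obtain ⟨T, hT, hcard, hrows⟩ := exists_left_matchbox_rank pos F hpos _ h0
  refine ⟨T, ⟨hT, fun T' hT' => ?_⟩, ?_⟩
  · rw [hcard]
    exact card_le_genRankA pos F hpos hT'
  · intro x hx
    rw [rowSet, Finset.mem_image] at hx
    obtain ⟨l, hl, rfl⟩ := hx
    exact hrows ⟨l, hl⟩

theorem extend_right (F : Type*) [Field F] (hpos : Function.Injective pos)
    {C : Finset (Fin n)} (hC : IsRightMatchbox pos C) :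
    ∃ ℬ', IsLargestRight pos ℬ' ∧ rowSet pos C ⊆ rowSet pos ℬ' := by
  classical
  obtain ⟨c, -, hdet⟩ := det_B_of_right pos F hpos hC
  have h0 := indep_rows_of_det_ne_zero _ _ _ hdet
  obtain ⟨T, hT, hcard, hrows⟩ := exists_right_matchbox_rank pos F hpos _ h0
  refine ⟨T, ⟨hT, fun T' hT' => ?_⟩, ?_⟩
  · rw [hcard]
    exact card_le_genRankB pos F hpos hT'
  · intro x hx
    rw [rowSet, Finset.mem_image] at hx
    obtain ⟨l, hl, rfl⟩ := hx
    exact hrows ⟨l, hl⟩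

theorem exists_full_matchbox (F : Type*) [Field F] (hpos : Function.Injective pos) :
    ∃ S, IsMatchbox pos S ∧ S.card = genRankM F pos := by
  classical
  obtain ⟨r, c, hrinj, hcinj, hrange, hdet⟩ :=
    exists_det_ne_zero_extension (patM pos (genericX F n))
      (fun x : PEmpty.{1} => x.elim) linearIndependent_empty_type
  obtain ⟨S, hS, hcard, -, -⟩ := matchbox_of_det pos F hpos r c hrinj hcinj hdet
  exact ⟨S, hS, by rw [hcard, Fintype.card_fin]; rfl⟩

end Extension

section Assembly

variable {m p q n : ℕ} (pos : Fin n → BipPos m p q)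

lemma rowSet_card {S : Finset (Fin n)} (hS : IsMatchbox pos S) :
    (rowSet pos S).card = S.card := by
  apply Finset.card_image_of_injOn
  intro l hl l' hl' hrow
  by_contra hne
  exact (hS l hl l' hl' hne).1 hrow

lemma rowSet_mono {S T : Finset (Fin n)} (h : S ⊆ T) : rowSet pos S ⊆ rowSet pos T :=
  Finset.image_subset_image h

lemma mcup_card_add_vCommon {𝒜 ℬ : Finset (Fin n)} (hA : IsMatchbox pos 𝒜)
    (hB : IsMatchbox pos ℬ) :
    (mcup pos 𝒜 ℬ).card + vCommon pos 𝒜 ℬ = 𝒜.card + ℬ.card := by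
  classical
  set filt := ℬ.filter fun l => posRow (pos l) ∉ rowSet pos 𝒜 with hfilt
  have hdisj : Disjoint 𝒜 filt := by
    rw [Finset.disjoint_right]
    intro l hlf hlA
    have := (Finset.mem_filter.mp hlf).2
    exact this (Finset.mem_image_of_mem _ hlA)
  have hcup : (mcup pos 𝒜 ℬ).card = 𝒜.card + filt.card := by
    rw [mcup, Finset.card_union_of_disjoint hdisj]
  have himg : filt.image (fun l => posRow (pos l)) = rowSet pos ℬ \ rowSet pos 𝒜 := by
    ext x
    simp only [Finset.mem_image, Finset.mem_sdiff, hfilt, Finset.mem_filter]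
    constructor
    · rintro ⟨l, ⟨hlB, hlr⟩, rfl⟩
      exact ⟨Finset.mem_image_of_mem _ hlB, hlr⟩
    · rintro ⟨hx, hxr⟩
      rw [rowSet, Finset.mem_image] at hx
      obtain ⟨l, hlB, rfl⟩ := hx
      exact ⟨l, ⟨hlB, hxr⟩, rfl⟩
  have hfcard : filt.card = (rowSet pos ℬ \ rowSet pos 𝒜).card := by
    rw [← himg]
    refine (Finset.card_image_of_injOn ?_).symm
    intro l hl l' hl' hrow
    have hlB := (Finset.mem_filter.mp hl).1
    have hl'B := (Finset.mem_filter.mp hl').1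
    by_contra hne
    exact (hB l hlB l' hl'B hne).1 hrow
  have hsd : (rowSet pos ℬ \ rowSet pos 𝒜).card + (rowSet pos ℬ ∩ rowSet pos 𝒜).card
      = (rowSet pos ℬ).card := Finset.card_sdiff_add_card_inter _ _
  have hv : vCommon pos 𝒜 ℬ = (rowSet pos ℬ ∩ rowSet pos 𝒜).card := by
    rw [vCommon, Finset.inter_comm]
  rw [hcup, hfcard, hv, add_assoc, hsd, rowSet_card pos hB]

lemma mcup_isMatchbox {𝒜 ℬ : Finset (Fin n)} (hA : IsLeftMatchbox pos 𝒜)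
    (hB : IsRightMatchbox pos ℬ) : IsMatchbox pos (mcup pos 𝒜 ℬ) := by
  classical
  intro l hl l' hl' hne
  rw [mcup, Finset.mem_union] at hl hl'
  have hcolLR : ∀ a b : Fin n, (pos a).isLeft → (pos b).isRight →
      posCol (pos a) ≠ posCol (pos b) := by
    intro a b ha hb
    rcases hpa : pos a with ⟨_, _⟩ | ⟨_, _⟩
    · rcases hpb : pos b with ⟨_, _⟩ | ⟨_, _⟩
      · rw [hpb] at hb; simp at hb
      · simp [posCol]
    · rw [hpa] at ha; simp at ha
  have hrowAF : ∀ a b : Fin n, a ∈ 𝒜 → b ∈ ℬ.filter (fun l => posRow (pos l) ∉ rowSet pos 𝒜) →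
      posRow (pos a) ≠ posRow (pos b) := by
    intro a b ha hb heq
    exact (Finset.mem_filter.mp hb).2 (heq ▸ Finset.mem_image_of_mem _ ha)
  rcases hl with hlA | hlF <;> rcases hl' with hl'A | hl'F
  · exact hA.1 l hlA l' hl'A hne
  · exact ⟨hrowAF l l' hlA hl'F,
      hcolLR l l' (hA.2 l hlA) (hB.2 l' (Finset.mem_filter.mp hl'F).1)⟩
  · constructor
    · exact fun h => hrowAF l' l hl'A hlF h.symm
    · exact fun h => hcolLR l' l (hA.2 l' hl'A) (hB.2 l (Finset.mem_filter.mp hlF).1) h.symm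
  · exact hB.1 l (Finset.mem_filter.mp hlF).1 l' (Finset.mem_filter.mp hl'F).1 hne

end Assembly

theorem stmt_7' (F : Type*) [Field F] (m p q n : ℕ) (pos : Fin n → BipPos m p q)
    (hpos : Function.Injective pos) (𝒜 ℬ : Finset (Fin n))
    (hopt : IsOptimalPair pos 𝒜 ℬ) :
    𝒜.card = genRankA F pos ∧ ℬ.card = genRankB F pos ∧
    (mcup pos 𝒜 ℬ).card = genRankM F pos := by
  classical
  obtain ⟨hA, hB, hmin⟩ := hopt
  have hAcard : 𝒜.card = genRankA F pos := largestLeft_card pos F hpos hA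
  have hBcard : ℬ.card = genRankB F pos := largestRight_card pos F hpos hB
  refine ⟨hAcard, hBcard, ?_⟩
  have hle : (mcup pos 𝒜 ℬ).card ≤ genRankM F pos :=
    card_le_genRankM pos F hpos (mcup_isMatchbox pos hA.1 hB.1)
  obtain ⟨𝒞, h𝒞, h𝒞card⟩ := exists_full_matchbox pos F hpos
  set CA := 𝒞.filter (fun l => (pos l).isLeft) with hCA
  set CB := 𝒞.filter (fun l => ¬ (pos l).isLeft) with hCB
  have hCAsub : CA ⊆ 𝒞 := Finset.filter_subset _ _
  have hCBsub : CB ⊆ 𝒞 := Finset.filter_subset _ _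
  have hCAmb : IsMatchbox pos CA := fun l hl l' hl' hne =>
    h𝒞 l (hCAsub hl) l' (hCAsub hl') hne
  have hCBmb : IsMatchbox pos CB := fun l hl l' hl' hne =>
    h𝒞 l (hCBsub hl) l' (hCBsub hl') hne
  have hCAleft : IsLeftMatchbox pos CA :=
    ⟨hCAmb, fun l hl => (Finset.mem_filter.mp hl).2⟩
  have hCBright : IsRightMatchbox pos CB := by
    refine ⟨hCBmb, fun l hl => ?_⟩
    have := (Finset.mem_filter.mp hl).2
    rcases hpl : pos l with ⟨_, _⟩ | ⟨_, _⟩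
    · rw [hpl] at this; simp at this
    · simp
  have hsplit : CA.card + CB.card = 𝒞.card :=
    Finset.card_filter_add_card_filter_not _
  obtain ⟨𝒜', hA', hrowsA⟩ := extend_left pos F hpos hCAleft
  obtain ⟨ℬ', hB', hrowsB⟩ := extend_right pos F hpos hCBright
  have hdisjrow : ∀ x, x ∈ rowSet pos CA → x ∈ rowSet pos CB → False := by
    intro x hxA hxB
    rw [rowSet, Finset.mem_image] at hxA hxB
    obtain ⟨l, hl, hlx⟩ := hxA
    obtain ⟨l', hl', hl'x⟩ := hxB
    have hne : l ≠ l' := by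
      rintro rfl
      exact (Finset.mem_filter.mp hl').2 (Finset.mem_filter.mp hl).2
    exact (h𝒞 l (hCAsub hl) l' (hCBsub hl') hne).1 (hlx.trans hl'x.symm)
  have key : vCommon pos 𝒜' ℬ' + (CA.card + CB.card) ≤ 𝒜'.card + ℬ'.card := by
    have hsub2 : rowSet pos 𝒜' ∩ rowSet pos ℬ'
        ⊆ (rowSet pos 𝒜' \ rowSet pos CA) ∪ (rowSet pos ℬ' \ rowSet pos CB) := by
      intro x hx
      rw [Finset.mem_inter] at hx
      rw [Finset.mem_union, Finset.mem_sdiff, Finset.mem_sdiff]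
      by_cases hxa : x ∈ rowSet pos CA
      · exact Or.inr ⟨hx.2, fun hxb => hdisjrow x hxa hxb⟩
      · exact Or.inl ⟨hx.1, hxa⟩
    have h1 : vCommon pos 𝒜' ℬ' ≤ (rowSet pos 𝒜' \ rowSet pos CA).card
        + (rowSet pos ℬ' \ rowSet pos CB).card :=
      le_trans (Finset.card_le_card hsub2) (Finset.card_union_le _ _)
    have h2 : (rowSet pos 𝒜' \ rowSet pos CA).card + (rowSet pos CA).card
        = (rowSet pos 𝒜').card := Finset.card_sdiff_add_card_eq_card hrowsA
    have h3 : (rowSet pos ℬ' \ rowSet pos CB).card + (rowSet pos CB).card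
        = (rowSet pos ℬ').card := Finset.card_sdiff_add_card_eq_card hrowsB
    have h4 : (rowSet pos CA).card = CA.card := rowSet_card pos hCAmb
    have h5 : (rowSet pos CB).card = CB.card := rowSet_card pos hCBmb
    have h6 : (rowSet pos 𝒜').card = 𝒜'.card := rowSet_card pos hA'.1.1
    have h7 : (rowSet pos ℬ').card = ℬ'.card := rowSet_card pos hB'.1.1
    omega
  have hA'card : 𝒜'.card = genRankA F pos := largestLeft_card pos F hpos hA'
  have hB'card : ℬ'.card = genRankB F pos := largestRight_card pos F hpos hB'
  have hminle : vCommon pos 𝒜 ℬ ≤ vCommon pos 𝒜' ℬ' := hmin 𝒜' ℬ' hA' hB'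
  have hsum : (mcup pos 𝒜 ℬ).card + vCommon pos 𝒜 ℬ = 𝒜.card + ℬ.card :=
    mcup_card_add_vCommon pos hA.1.1 hB.1.1
  omega


/-- Lemma 5: for an optimal pair `(𝒜, ℬ)` of largest matchboxes,
`|𝒜| = r_A`, `|ℬ| = r_B`, and `|𝒜⋓ℬ| = r_M`. -/
theorem stmt_7 (F : Type*) [Field F] (m p q n : ℕ) (pos : Fin n → BipPos m p q)
    (hpos : Function.Injective pos) (𝒜 ℬ : Finset (Fin n))
    (hopt : IsOptimalPair pos 𝒜 ℬ) :
    𝒜.card = genRankA F pos ∧ ℬ.card = genRankB F pos ∧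
    (mcup pos 𝒜 ℬ).card = genRankM F pos :=
  stmt_7' F m p q n pos hpos 𝒜 ℬ hopt
end
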